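/- arXiv:0910.1360 — 2 statements merged into one kernel-verified Lean document; each statement's English description precedes it below -/
import Mathlib

section
/- Let T be an (ℝ·ℝ)-embeddable tree of cardinality at most the continuum, where ℝ·ℝ is the lexicographic product of the real line with itself. Then the one-point compactification A(T) is 3-determined. -/
open Filter Topology Set

universe u v

/-- A tree in the sense of the paper: a partial order with a minimal element `⊥`,
binary greatest lower bounds, and each set of predecessors `[0,t)` well ordered
(a linearly ordered, well-founded chain). -/
class TreeOrder (T : Type u) extends SemilatticeInf T, OrderBot T where
  chain_lt : ∀ t : T, IsChain (· ≤ ·) {x : T | x < t}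
  isWF_lt : ∀ t : T, Set.IsWF {x : T | x < t}

/-- The interval topology, generated by the intervals `(s,t]` (together with the
initial intervals `[0,t]`, which make the root an interior point of `[0,t]`). -/
def intervalTopology (T : Type u) [Preorder T] : TopologicalSpace T :=
  TopologicalSpace.generateFrom
    ({S : Set T | ∃ a b : T, S = Set.Ioc a b} ∪ {S : Set T | ∃ b : T, S = Set.Iic b})

instance TreeOrder.toTopologicalSpace (T : Type u) [TreeOrder T] : TopologicalSpace T :=
  intervalTopology T

/-- A compact space `K` is `n`-determined if there are a second countable space `S`
and an upper semicontinuous map `Φ` from `S` to nonempty subsets of `K` of size at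
most `n` whose union is all of `K`. -/
def NDetermined (n : ℕ) (K : Type u) [TopologicalSpace K] : Prop :=
  ∃ (S : Type u) (_ : TopologicalSpace S) (_ : SecondCountableTopology S) (Φ : S → Set K),
    (∀ s : S, (Φ s).Nonempty ∧ (Φ s).Finite ∧ (Φ s).ncard ≤ n) ∧
    (∀ (s : S) (V : Set K), IsOpen V → Φ s ⊆ V →
      ∃ U : Set S, IsOpen U ∧ s ∈ U ∧ ∀ s' ∈ U, Φ s' ⊆ V) ∧
    (⋃ s : S, Φ s) = Set.univ

namespace TreeProof

variable {T : Type u} [TreeOrder T]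

lemma comparable_of_le {z x y : T} (hx : x ≤ z) (hy : y ≤ z) : x ≤ y ∨ y ≤ x := by
  rcases eq_or_lt_of_le hx with rfl | hx'
  · exact Or.inr hy
  rcases eq_or_lt_of_le hy with rfl | hy'
  · exact Or.inl hx
  rcases eq_or_ne x y with rfl | hne
  · exact Or.inl le_rfl
  exact TreeOrder.chain_lt z hx' hy' hne

lemma exists_least {z : T} (s : Set T) (hs : ∀ x ∈ s, x ≤ z) (hne : s.Nonempty) :
    ∃ u, u ∈ s ∧ ∀ v ∈ s, u ≤ v := by
  have hwf : s.IsWF := by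
    refine Set.IsWF.mono ((TreeOrder.isWF_lt z).insert z) ?_
    intro x hx
    rcases eq_or_lt_of_le (hs x hx) with rfl | h
    · exact Set.mem_insert _ _
    · exact Set.mem_insert_of_mem _ h
  refine ⟨hwf.min hne, hwf.min_mem hne, fun v hv => ?_⟩
  rcases comparable_of_le (hs _ (hwf.min_mem hne)) (hs v hv) with h | h
  · exact h
  · rcases eq_or_lt_of_le h with rfl | h'
    · exact le_rfl
    · exact absurd h' (hwf.not_lt_min hne hv)

/-- The closedness property of a set w.r.t. the interval topology. -/
def CLp (C : Set T) : Prop :=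
  ∀ t, t ∉ C → t = ⊥ ∨ ∃ a, a < t ∧ ∀ x, a < x → x ≤ t → x ∉ C

lemma exists_csup {C : Set T} (hCL : CLp C) {M : Set T} (hMC : M ⊆ C) {z : T}
    (hMz : ∀ x ∈ M, x ≤ z) (hne : M.Nonempty) :
    ∃ w, w ∈ C ∧ w ≤ z ∧ ∀ x ∈ M, x ≤ w := by
  obtain ⟨w, hw, hleast⟩ := exists_least {y | y ≤ z ∧ ∀ x ∈ M, x ≤ y}
    (fun x hx => hx.1) ⟨z, le_rfl, hMz⟩
  refine ⟨w, ?_, hw.1, hw.2⟩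
  by_contra hwC
  rcases hCL w hwC with rfl | ⟨a, haw, ha⟩
  · obtain ⟨x, hx⟩ := hne
    have : x = ⊥ := le_bot_iff.mp (hw.2 x hx)
    exact hwC (this ▸ hMC hx)
  · have haUB : a ∈ {y | y ≤ z ∧ ∀ x ∈ M, x ≤ y} := by
      refine ⟨le_trans haw.le hw.1, fun x hx => ?_⟩
      have hxw : x ≤ w := hw.2 x hx
      rcases comparable_of_le haw.le hxw with h | h
      · rcases eq_or_lt_of_le h with rfl | h'
        · exact le_rfl
        · exact absurd (hMC hx) (ha x h' hxw)
      · exact h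
    exact absurd (hleast a haUB) (not_le_of_gt haw)

/-- every sequence bounded by `z` has a nondecreasing subsequence. -/
lemma exists_monotone_subseq {z : T} (x : ℕ → T) (hx : ∀ n, x n ≤ z) :
    ∃ φ : ℕ → ℕ, StrictMono φ ∧ ∀ i j, i ≤ j → x (φ i) ≤ x (φ j) := by
  have hsel : ∀ N : ℕ, ∃ k, N ≤ k ∧ ∀ j, N ≤ j → x k ≤ x j := by
    intro N
    obtain ⟨u, ⟨k, hk, rfl⟩, hleast⟩ := exists_least {y | ∃ j, N ≤ j ∧ y = x j}
      (fun y hy => by obtain ⟨j, _, rfl⟩ := hy; exact hx j) ⟨x N, N, le_rfl, rfl⟩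
    exact ⟨k, hk, fun j hj => hleast (x j) ⟨j, hj, rfl⟩⟩
  choose sel hsel1 hsel2 using hsel
  let φ : ℕ → ℕ := fun n => Nat.rec (sel 0) (fun _ prev => sel (prev + 1)) n
  have hφs : ∀ n, φ (n + 1) = sel (φ n + 1) := fun n => rfl
  have hmono : StrictMono φ := strictMono_nat_of_lt_succ (fun n => by
    have h := hsel1 (φ n + 1); rw [hφs n]; omega)
  refine ⟨φ, hmono, fun i j hij => ?_⟩
  rcases eq_or_lt_of_le hij with rfl | hlt
  · exact le_rfl
  cases i with
  | zero => exact hsel2 0 (φ j) (Nat.zero_le _)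
  | succ i' =>
      have h1 : φ i' + 1 ≤ φ (i' + 1) := hsel1 (φ i' + 1)
      have h2 : φ (i' + 1) ≤ φ j := hmono.monotone hlt.le
      exact hsel2 (φ i' + 1) (φ j) (le_trans h1 h2)

lemma eventually_const_of_antitone {z : T} (v : ℕ → T) (hv : ∀ k, v (k + 1) ≤ v k)
    (hz : ∀ k, v k ≤ z) : ∃ N, ∀ k, N ≤ k → v k = v N := by
  have hmono : ∀ i j, i ≤ j → v j ≤ v i := by
    intro i j hij
    induction j, hij using Nat.le_induction with
    | base => exact le_rfl
    | succ j' hij ih => exact le_trans (hv j') ih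
  obtain ⟨u, ⟨N, rfl⟩, hleast⟩ := exists_least {y | ∃ k, y = v k}
    (fun y hy => by obtain ⟨k, rfl⟩ := hy; exact hz k) ⟨v 0, 0, rfl⟩
  exact ⟨N, fun k hk => le_antisymm (hmono N k hk) (hleast (v k) ⟨k, rfl⟩)⟩

section F
variable (f : T → ℝ ×ₗ ℝ)

def f1 (t : T) : ℝ := (ofLex (f t)).1

def f2 (t : T) : ℝ := (ofLex (f t)).2

variable {f}

lemma lt_cases (hf : StrictMono f) {x y : T} (h : x < y) :
    f1 f x < f1 f y ∨ (f1 f x = f1 f y ∧ f2 f x < f2 f y) :=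
  Prod.Lex.lt_iff.mp (hf h)

lemma f1_mono (hf : StrictMono f) {x y : T} (h : x ≤ y) : f1 f x ≤ f1 f y := by
  rcases eq_or_lt_of_le h with rfl | h'
  · exact le_rfl
  · rcases lt_cases hf h' with h'' | ⟨h1, _⟩
    · exact h''.le
    · exact h1.le

lemma f2_le (hf : StrictMono f) {x y : T} (h : x ≤ y) (h1 : f1 f x = f1 f y) :
    f2 f x ≤ f2 f y := by
  rcases eq_or_lt_of_le h with rfl | h'
  · exact le_rfl
  · rcases lt_cases hf h' with h'' | ⟨_, h2⟩
    · exact absurd h1 (ne_of_lt h'')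
    · exact h2.le

lemma f2_lt (hf : StrictMono f) {x y : T} (h : x < y) (h1 : f1 f x = f1 f y) :
    f2 f x < f2 f y := by
  rcases lt_cases hf h with h'' | ⟨_, h2⟩
  · exact absurd h1 (ne_of_lt h'')
  · exact h2

variable (f)

noncomputable def mfun (t : T) : T :=
  (exists_least {u | u ≤ t ∧ f1 f u = f1 f t} (fun x hx => hx.1) ⟨t, le_rfl, rfl⟩).choose

lemma mfun_spec (t : T) :
    (mfun f t ≤ t ∧ f1 f (mfun f t) = f1 f t) ∧
      ∀ v ∈ {u | u ≤ t ∧ f1 f u = f1 f t}, mfun f t ≤ v :=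
  (exists_least {u | u ≤ t ∧ f1 f u = f1 f t} (fun x hx => hx.1) ⟨t, le_rfl, rfl⟩).choose_spec

lemma mfun_le (t : T) : mfun f t ≤ t := (mfun_spec f t).1.1

lemma mfun_f1 (t : T) : f1 f (mfun f t) = f1 f t := (mfun_spec f t).1.2

lemma mfun_min {u t : T} (hu : u ≤ t) (h : f1 f u = f1 f t) : mfun f t ≤ u :=
  (mfun_spec f t).2 u ⟨hu, h⟩

lemma mfun_eq {u t : T} (hu : u ≤ t) (h : f1 f u = f1 f t) : mfun f u = mfun f t := by
  refine le_antisymm ?_ ?_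
  · exact mfun_min f (mfun_min f hu h) (by rw [mfun_f1, h])
  · exact mfun_min f (le_trans (mfun_le f u) hu) (by rw [mfun_f1, h])

lemma mfun_idem (t : T) : mfun f (mfun f t) = mfun f t :=
  mfun_eq f (mfun_le f t) (mfun_f1 f t)

variable {f}

lemma lt_mfun (hf : StrictMono f) {u t : T} (hu : u ≤ t) (h : f1 f u < f1 f t) :
    u < mfun f t := by
  rcases comparable_of_le hu (mfun_le f t) with h' | h'
  · rcases eq_or_lt_of_le h' with rfl | h''
    · exact absurd (mfun_f1 f t) (ne_of_lt h)
    · exact h''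
  · exact absurd (mfun_f1 f t ▸ f1_mono hf h') (not_le_of_gt h)

variable (f) (g : T → ℝ)

noncomputable def uH (q : ℚ) (t : T) : T :=
  if h : (q : ℝ) < f1 f t then
    (exists_least {u | u ≤ t ∧ (q : ℝ) < f1 f u} (fun x hx => hx.1) ⟨t, le_rfl, h⟩).choose
  else t

noncomputable def Hc (q : ℚ) (t : T) : ℝ := if (q : ℝ) < f1 f t then g (uH f q t) else 0

lemma uH_spec {q : ℚ} {t : T} (h : (q : ℝ) < f1 f t) :
    (uH f q t ≤ t ∧ (q : ℝ) < f1 f (uH f q t)) ∧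
      ∀ v ∈ {u | u ≤ t ∧ (q : ℝ) < f1 f u}, uH f q t ≤ v := by
  rw [uH, dif_pos h]
  exact (exists_least {u | u ≤ t ∧ (q : ℝ) < f1 f u} (fun x hx => hx.1)
    ⟨t, le_rfl, h⟩).choose_spec

lemma uH_le {q : ℚ} {t : T} (h : (q : ℝ) < f1 f t) : uH f q t ≤ t := (uH_spec f h).1.1

lemma uH_gt {q : ℚ} {t : T} (h : (q : ℝ) < f1 f t) : (q : ℝ) < f1 f (uH f q t) :=
  (uH_spec f h).1.2

lemma uH_least {q : ℚ} {t : T} (h : (q : ℝ) < f1 f t) {v : T} (hv : v ≤ t)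
    (hv2 : (q : ℝ) < f1 f v) : uH f q t ≤ v := (uH_spec f h).2 v ⟨hv, hv2⟩

lemma Hc_eq {q : ℚ} {t : T} (h : (q : ℝ) < f1 f t) : Hc f g q t = g (uH f q t) := if_pos h

lemma Hc_eq_zero {q : ℚ} {t : T} (h : ¬ (q : ℝ) < f1 f t) : Hc f g q t = 0 := if_neg h

variable {f}

lemma uH_anti (hf : StrictMono f) {q : ℚ} {t t' : T} (h : (q : ℝ) < f1 f t) (hty : t ≤ t') :
    uH f q t' ≤ uH f q t :=
  uH_least f (lt_of_lt_of_le h (f1_mono hf hty)) ((uH_le f h).trans hty) (uH_gt f h)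

lemma uH_mfun {q : ℚ} {t : T} (h : (q : ℝ) < f1 f t) : uH f q (mfun f t) = uH f q t := by
  have hm : (q : ℝ) < f1 f (mfun f t) := by rw [mfun_f1]; exact h
  refine le_antisymm ?_ ?_
  · refine uH_least f hm ?_ (uH_gt f h)
    exact uH_least f h (mfun_le f t) hm
  · exact uH_least f h ((uH_le f hm).trans (mfun_le f t)) (uH_gt f hm)

lemma Hc_mfun (t : T) (q : ℚ) : Hc f g q (mfun f t) = Hc f g q t := by
  by_cases h : (q : ℝ) < f1 f t
  · have hm : (q : ℝ) < f1 f (mfun f t) := by rw [mfun_f1]; exact h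
    rw [Hc_eq f g hm, Hc_eq f g h, uH_mfun h]
  · have hm : ¬ (q : ℝ) < f1 f (mfun f t) := by rw [mfun_f1]; exact h
    rw [Hc_eq_zero f g hm, Hc_eq_zero f g h]

variable (f)

noncomputable def uh (q : ℚ) (t : T) : T :=
  if h : (q : ℝ) < f2 f t then
    (exists_least {u | u ≤ t ∧ f1 f u = f1 f t ∧ (q : ℝ) < f2 f u} (fun x hx => hx.1)
      ⟨t, le_rfl, rfl, h⟩).choose
  else t

noncomputable def hc (q : ℚ) (t : T) : ℝ := if (q : ℝ) < f2 f t then g (uh f q t) else 0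

lemma uh_spec {q : ℚ} {t : T} (h : (q : ℝ) < f2 f t) :
    (uh f q t ≤ t ∧ f1 f (uh f q t) = f1 f t ∧ (q : ℝ) < f2 f (uh f q t)) ∧
      ∀ v ∈ {u | u ≤ t ∧ f1 f u = f1 f t ∧ (q : ℝ) < f2 f u}, uh f q t ≤ v := by
  rw [uh, dif_pos h]
  exact (exists_least {u | u ≤ t ∧ f1 f u = f1 f t ∧ (q : ℝ) < f2 f u} (fun x hx => hx.1)
    ⟨t, le_rfl, rfl, h⟩).choose_spec

lemma uh_le {q : ℚ} {t : T} (h : (q : ℝ) < f2 f t) : uh f q t ≤ t := (uh_spec f h).1.1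

lemma uh_f1 {q : ℚ} {t : T} (h : (q : ℝ) < f2 f t) : f1 f (uh f q t) = f1 f t :=
  (uh_spec f h).1.2.1

lemma uh_gt {q : ℚ} {t : T} (h : (q : ℝ) < f2 f t) : (q : ℝ) < f2 f (uh f q t) :=
  (uh_spec f h).1.2.2

lemma uh_least {q : ℚ} {t : T} (h : (q : ℝ) < f2 f t) {v : T} (hv : v ≤ t)
    (hv1 : f1 f v = f1 f t) (hv2 : (q : ℝ) < f2 f v) : uh f q t ≤ v :=
  (uh_spec f h).2 v ⟨hv, hv1, hv2⟩

lemma hc_eq {q : ℚ} {t : T} (h : (q : ℝ) < f2 f t) : hc f g q t = g (uh f q t) := if_pos h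

lemma hc_eq_zero {q : ℚ} {t : T} (h : ¬ (q : ℝ) < f2 f t) : hc f g q t = 0 := if_neg h

variable {f}

lemma uh_anti (hf : StrictMono f) {q : ℚ} {t t' : T} (h : (q : ℝ) < f2 f t) (hty : t ≤ t')
    (h1 : f1 f t = f1 f t') : uh f q t' ≤ uh f q t := by
  have h' : (q : ℝ) < f2 f t' := lt_of_lt_of_le h (f2_le hf hty h1)
  exact uh_least f h' ((uh_le f h).trans hty) (by rw [uh_f1 f h, h1]) (uh_gt f h)

lemma uh_mfun {q : ℚ} {t : T} (h : (q : ℝ) < f2 f (mfun f t)) :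
    uh f q (mfun f t) = mfun f t := by
  refine le_antisymm (uh_le f h) ?_
  exact mfun_min f ((uh_le f h).trans (mfun_le f t)) (by rw [uh_f1 f h, mfun_f1])

lemma hc_mfun (t : T) (q : ℚ) :
    hc f g q (mfun f t) = if (q : ℝ) < f2 f (mfun f t) then g (mfun f t) else 0 := by
  by_cases h : (q : ℝ) < f2 f (mfun f t)
  · rw [hc_eq f g h, if_pos h, uh_mfun h]
  · rw [hc_eq_zero f g h, if_neg h]

variable {g}

/-- The `H`-cut stabilization argument. -/
lemma variantH (hf : StrictMono f) (hg : Function.Injective g) {τ zs r : T} {y : ℕ → T}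
    (hyz : ∀ k, y k ≤ zs) (hyτ : ∀ k, ¬ y k ≤ τ) (hyr : ∀ k, y k ⊓ τ ≤ r)
    (hf1r : f1 f r < f1 f τ)
    (h1y : Tendsto (fun k => f1 f (y k)) atTop (𝓝 (f1 f τ)))
    (hHy : ∀ q : ℚ, (q : ℝ) < f1 f τ →
      Tendsto (fun k => Hc f g q (y k)) atTop (𝓝 (Hc f g q τ))) : False := by
  obtain ⟨q, hq1, hq2⟩ := exists_rat_btwn hf1r
  have hev : ∀ᶠ k in atTop, (q : ℝ) < f1 f (y k) :=
    (tendsto_order.mp h1y).1 _ hq2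
  obtain ⟨K, hK⟩ := eventually_atTop.mp hev
  set y' : ℕ → T := fun k => y (k + K) with hy'
  have hy'q : ∀ k, (q : ℝ) < f1 f (y' k) := fun k => hK _ (Nat.le_add_left K k)
  obtain ⟨ρ, hρ, hρmono⟩ := exists_monotone_subseq (z := zs) y' (fun k => hyz _)
  set v : ℕ → T := fun k => uH f q (y' (ρ k)) with hv
  have hvanti : ∀ k, v (k + 1) ≤ v k := fun k =>
    uH_anti hf (hy'q (ρ k)) (hρmono k (k + 1) (Nat.le_succ k))
  have hvz : ∀ k, v k ≤ zs := fun k => (uH_le f (hy'q (ρ k))).trans (hyz _)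
  obtain ⟨N, hN⟩ := eventually_const_of_antitone v hvanti hvz
  set u := v N with hu
  have hσ : StrictMono (fun k => ρ k + K) := fun a b hab => by
    simp only []; have := hρ hab; omega
  have hT : Tendsto (fun k => Hc f g q (y (ρ k + K))) atTop (𝓝 (Hc f g q τ)) :=
    (hHy q hq2).comp (hσ.tendsto_atTop)
  have hEE : (fun k => Hc f g q (y (ρ k + K))) =ᶠ[atTop] (fun _ => g u) := by
    filter_upwards [eventually_ge_atTop N] with k hk
    have : Hc f g q (y' (ρ k)) = g (v k) := Hc_eq f g (hy'q (ρ k))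
    rw [show y (ρ k + K) = y' (ρ k) from rfl, this, hN k hk]
  have hlim : Hc f g q τ = g u := tendsto_nhds_unique (hT.congr' hEE) tendsto_const_nhds |>.symm |>.symm
  have hHτ : Hc f g q τ = g (uH f q τ) := Hc_eq f g hq2
  have huu : uH f q τ = u := hg (hHτ.symm.trans hlim)
  have huτ : u ≤ τ := huu ▸ uH_le f hq2
  have hur : u ≤ r := le_trans (le_inf (uH_le f (hy'q (ρ N))) huτ) (hyr _)
  exact absurd (uH_gt f (hy'q (ρ N))) (not_lt_of_ge ((f1_mono hf hur).trans hq1.le))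

/-- The `h`-cut (block cut) stabilization argument. -/
lemma varianth (hf : StrictMono f) (hg : Function.Injective g) {τ zs r : T} {y : ℕ → T}
    (hyz : ∀ k, y k ≤ zs) (hyτ : ∀ k, ¬ y k ≤ τ) (hyr : ∀ k, y k ⊓ τ ≤ r)
    (hf1r : f1 f r = f1 f τ) (hf2r : f2 f r < f2 f τ)
    (hf1y : ∀ k, f1 f (y k) = f1 f τ)
    (h2y : Tendsto (fun k => f2 f (y k)) atTop (𝓝 (f2 f τ)))
    (hhy : ∀ q : ℚ, (q : ℝ) < f2 f τ →
      Tendsto (fun k => hc f g q (y k)) atTop (𝓝 (hc f g q τ))) : False := by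
  obtain ⟨q, hq1, hq2⟩ := exists_rat_btwn hf2r
  have hev : ∀ᶠ k in atTop, (q : ℝ) < f2 f (y k) :=
    (tendsto_order.mp h2y).1 _ hq2
  obtain ⟨K, hK⟩ := eventually_atTop.mp hev
  set y' : ℕ → T := fun k => y (k + K) with hy'
  have hy'q : ∀ k, (q : ℝ) < f2 f (y' k) := fun k => hK _ (Nat.le_add_left K k)
  obtain ⟨ρ, hρ, hρmono⟩ := exists_monotone_subseq (z := zs) y' (fun k => hyz _)
  set v : ℕ → T := fun k => uh f q (y' (ρ k)) with hv
  have hvanti : ∀ k, v (k + 1) ≤ v k := fun k =>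
    uh_anti hf (hy'q (ρ k)) (hρmono k (k + 1) (Nat.le_succ k))
      ((hf1y _).trans (hf1y _).symm)
  have hvz : ∀ k, v k ≤ zs := fun k => (uh_le f (hy'q (ρ k))).trans (hyz _)
  obtain ⟨N, hN⟩ := eventually_const_of_antitone v hvanti hvz
  set u := v N with hu
  have hσ : StrictMono (fun k => ρ k + K) := fun a b hab => by
    simp only []; have := hρ hab; omega
  have hT : Tendsto (fun k => hc f g q (y (ρ k + K))) atTop (𝓝 (hc f g q τ)) :=
    (hhy q hq2).comp (hσ.tendsto_atTop)
  have hEE : (fun k => hc f g q (y (ρ k + K))) =ᶠ[atTop] (fun _ => g u) := by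
    filter_upwards [eventually_ge_atTop N] with k hk
    have : hc f g q (y' (ρ k)) = g (v k) := hc_eq f g (hy'q (ρ k))
    rw [show y (ρ k + K) = y' (ρ k) from rfl, this, hN k hk]
  have hlim : hc f g q τ = g u := tendsto_nhds_unique (hT.congr' hEE) tendsto_const_nhds |>.symm |>.symm
  have hhτ : hc f g q τ = g (uh f q τ) := hc_eq f g hq2
  have huu : uh f q τ = u := hg (hhτ.symm.trans hlim)
  have huτ : u ≤ τ := huu ▸ uh_le f hq2
  have hur : u ≤ r := le_trans (le_inf (uh_le f (hy'q (ρ N))) huτ) (hyr _)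
  have hf1u : f1 f u = f1 f r := by
    rw [uh_f1 f (hy'q (ρ N)), hf1y _, hf1r]
  exact absurd (uh_gt f (hy'q (ρ N))) (not_lt_of_ge ((f2_le hf hur hf1u).trans hq1.le))

lemma margin1 (hf : StrictMono f) {b : T} {C : Set T} (hCb : ∀ x ∈ C, x ≤ b) {τ : T}
    {y : ℕ → T} (hyC : ∀ k, y k ∈ C) (hgt : ∀ k, f1 f τ < f1 f (y k))
    (h1y : Tendsto (fun k => f1 f (y k)) atTop (𝓝 (f1 f τ))) : False := by
  obtain ⟨w, hw, hleast⟩ := exists_least {v | v ∈ C ∧ f1 f τ < f1 f v}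
    (fun v hv => hCb v hv.1) ⟨y 0, hyC 0, hgt 0⟩
  have : ∀ k, f1 f w ≤ f1 f (y k) := fun k => f1_mono hf (hleast _ ⟨hyC k, hgt k⟩)
  exact absurd (ge_of_tendsto h1y (Eventually.of_forall this)) (not_le_of_gt hw.2)

lemma margin2 (hf : StrictMono f) {b : T} {C : Set T} (hCb : ∀ x ∈ C, x ≤ b) {τ : T}
    {y : ℕ → T} (hyC : ∀ k, y k ∈ C) (hf1 : ∀ k, f1 f (y k) = f1 f τ)
    (hgt : ∀ k, f2 f τ < f2 f (y k))
    (h2y : Tendsto (fun k => f2 f (y k)) atTop (𝓝 (f2 f τ))) : False := by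
  obtain ⟨w, hw, hleast⟩ := exists_least {v | v ∈ C ∧ f1 f v = f1 f τ ∧ f2 f τ < f2 f v}
    (fun v hv => hCb v hv.1) ⟨y 0, hyC 0, hf1 0, hgt 0⟩
  have : ∀ k, f2 f w ≤ f2 f (y k) := fun k =>
    f2_le hf (hleast _ ⟨hyC k, hf1 k, hgt k⟩) (hw.2.1.trans (hf1 k).symm)
  exact absurd (ge_of_tendsto h2y (Eventually.of_forall this)) (not_le_of_gt hw.2.2)

lemma below_eq (hf : StrictMono f) {C : Set T} (hCL : CLp C) {τ : T} (hτ : τ ∉ C)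
    {y : ℕ → T} (hyC : ∀ k, y k ∈ C) (hylt : ∀ k, y k < τ) (hyf1 : ∀ k, f1 f (y k) = f1 f τ)
    (h2y : Tendsto (fun k => f2 f (y k)) atTop (𝓝 (f2 f τ))) : False := by
  rcases hCL τ hτ with rfl | ⟨a, haτ, ha⟩
  · exact absurd (hylt 0) (not_lt_bot)
  have hya : ∀ k, y k ≤ a := by
    intro k
    rcases comparable_of_le (hylt k).le haτ.le with h | h
    · exact h
    · rcases eq_or_lt_of_le h with rfl | h'
      · exact le_rfl
      · exact absurd (hyC k) (ha _ h' (hylt k).le)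
  obtain ⟨w, hwC, hwa, hwUB⟩ := exists_csup hCL (M := {v | v ∈ C ∧ v ≤ a ∧ f1 f v = f1 f τ})
    (fun v hv => hv.1) (fun v hv => hv.2.1) ⟨y 0, hyC 0, hya 0, hyf1 0⟩
  have hmw : mfun f τ ≤ w := (mfun_min f (hylt 0).le (hyf1 0)).trans (hwUB _ ⟨hyC 0, hya 0, hyf1 0⟩)
  have hwτ : w < τ := lt_of_le_of_lt hwa haτ
  have hf1w : f1 f w = f1 f τ :=
    le_antisymm (f1_mono hf hwτ.le) (by rw [← mfun_f1 f τ]; exact f1_mono hf hmw)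
  have hf2w : f2 f w < f2 f τ := f2_lt hf hwτ hf1w
  have : ∀ k, f2 f (y k) ≤ f2 f w := fun k =>
    f2_le hf (hwUB _ ⟨hyC k, hya k, hyf1 k⟩) ((hyf1 k).trans hf1w.symm)
  exact absurd (le_of_tendsto h2y (Eventually.of_forall this)) (not_le_of_gt hf2w)

lemma below_lt (hf : StrictMono f) {C : Set T} (hCL : CLp C) {τ : T}
    (hmτ : mfun f τ ∉ C) {y : ℕ → T} (hyC : ∀ k, y k ∈ C) (hylt : ∀ k, y k < τ)
    (hyf1 : ∀ k, f1 f (y k) < f1 f τ)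
    (h1y : Tendsto (fun k => f1 f (y k)) atTop (𝓝 (f1 f τ))) : False := by
  obtain ⟨w, hwC, hwm, hwUB⟩ := exists_csup hCL
    (M := {v | v ∈ C ∧ v < τ ∧ f1 f v < f1 f τ}) (fun v hv => hv.1)
    (fun v hv => (lt_mfun hf hv.2.1.le hv.2.2).le) ⟨y 0, hyC 0, hylt 0, hyf1 0⟩
  have hwlt : w < mfun f τ := lt_of_le_of_ne hwm (fun h => hmτ (h ▸ hwC))
  have hf1w : f1 f w < f1 f τ := by
    rcases eq_or_lt_of_le ((f1_mono hf (hwm.trans (mfun_le f τ)))) with h | h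
    · exact absurd (mfun_min f (hwm.trans (mfun_le f τ)) h) (not_le_of_gt hwlt)
    · exact h
  have : ∀ k, f1 f (y k) ≤ f1 f w := fun k =>
    f1_mono hf (hwUB _ ⟨hyC k, hylt k, hyf1 k⟩)
  exact absurd (le_of_tendsto h1y (Eventually.of_forall this)) (not_le_of_gt hf1w)

lemma cutcase (hf : StrictMono f) (hg : Function.Injective g) {b : T} {C : Set T}
    (hCb : ∀ x ∈ C, x ≤ b) (hCL : CLp C) {τ : T}
    {y : ℕ → T} (hyC : ∀ k, y k ∈ C) (hy1 : ∀ k, ¬ y k ≤ τ) (hy2 : ∀ k, ¬ τ ≤ y k)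
    (hcase : (∀ k, f1 f (y k) = f1 f τ) ∨ (∀ k, f1 f (y k) < f1 f τ))
    (h1y : Tendsto (fun k => f1 f (y k)) atTop (𝓝 (f1 f τ)))
    (h2y : Tendsto (fun k => f2 f (y k)) atTop (𝓝 (f2 f τ)))
    (hHy : ∀ q : ℚ, (q : ℝ) < f1 f τ →
      Tendsto (fun k => Hc f g q (y k)) atTop (𝓝 (Hc f g q τ)))
    (hhy : ∀ q : ℚ, (q : ℝ) < f2 f τ →
      Tendsto (fun k => hc f g q (y k)) atTop (𝓝 (hc f g q τ))) : False := by
  obtain ⟨zs, hzsC, hzsb, hzsUB⟩ := exists_csup hCL (M := {v | ∃ k, v = y k})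
    (fun v hv => by obtain ⟨k, rfl⟩ := hv; exact hyC k)
    (z := b) (fun v hv => by obtain ⟨k, rfl⟩ := hv; exact hCb _ (hyC k)) ⟨y 0, 0, rfl⟩
  have hyz : ∀ k, y k ≤ zs := fun k => hzsUB _ ⟨k, rfl⟩
  have hτzs : ¬ τ ≤ zs := by
    intro h
    rcases comparable_of_le (hyz 0) h with h' | h'
    · exact hy1 0 h'
    · exact hy2 0 h'
  set r := zs ⊓ τ with hr
  have hrτ : r < τ := lt_of_le_of_ne inf_le_right (fun h => hτzs (inf_eq_right.mp h))
  have hyr : ∀ k, y k ⊓ τ ≤ r := fun k => inf_le_inf_right τ (hyz k)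
  have hry : ∀ k, r ≤ y k := by
    intro k
    rcases comparable_of_le (inf_le_left : r ≤ zs) (hyz k) with h | h
    · exact h
    · exact absurd (h.trans inf_le_right) (hy1 k)
  rcases hcase with heq | hlt
  · rcases eq_or_lt_of_le (f1_mono hf hrτ.le) with hfr | hfr
    · exact varianth hf hg hyz hy1 hyr hfr (f2_lt hf hrτ hfr) heq h2y hhy
    · exact variantH hf hg hyz hy1 hyr hfr h1y hHy
  · have hfr : f1 f r < f1 f τ := lt_of_le_of_lt (f1_mono hf (hry 0)) (hlt 0)
    exact variantH hf hg hyz hy1 hyr hfr h1y hHy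

/-- The key lemma: a sequence of points of a closed chain `C` cannot converge, in all
the codes, to a point `τ` outside `C` whose block minimum is also outside `C`. -/
lemma key (hf : StrictMono f) (hg : Function.Injective g) {b : T} {C : Set T}
    (hCb : ∀ x ∈ C, x ≤ b) (hCL : CLp C) {τ : T} (hτ : τ ∉ C) (hmτ : mfun f τ ∉ C)
    {x : ℕ → T} (hxC : ∀ n, x n ∈ C)
    (h1 : Tendsto (fun n => f1 f (x n)) atTop (𝓝 (f1 f τ)))
    (h2 : Tendsto (fun n => f2 f (x n)) atTop (𝓝 (f2 f τ)))
    (hH : ∀ q : ℚ, (q : ℝ) < f1 f τ →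
      Tendsto (fun n => Hc f g q (x n)) atTop (𝓝 (Hc f g q τ)))
    (hh : ∀ q : ℚ, (q : ℝ) < f2 f τ →
      Tendsto (fun n => hc f g q (x n)) atTop (𝓝 (hc f g q τ))) : False := by
  classical
  set B1 : ℕ → Prop := fun n => f1 f τ < f1 f (x n) with hB1
  set B2 : ℕ → Prop := fun n => f1 f (x n) = f1 f τ ∧ f2 f τ < f2 f (x n) with hB2
  set B3 : ℕ → Prop := fun n => x n < τ ∧ f1 f (x n) = f1 f τ with hB3
  set B4 : ℕ → Prop := fun n =>
    ¬ x n ≤ τ ∧ ¬ τ ≤ x n ∧ f1 f (x n) = f1 f τ with hB4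
  set B5 : ℕ → Prop := fun n => x n < τ ∧ f1 f (x n) < f1 f τ with hB5
  set B6 : ℕ → Prop := fun n =>
    ¬ x n ≤ τ ∧ ¬ τ ≤ x n ∧ f1 f (x n) < f1 f τ with hB6
  have htot : ∀ n, B1 n ∨ B2 n ∨ B3 n ∨ B4 n ∨ B5 n ∨ B6 n := by
    intro n
    have hne : x n ≠ τ := fun h => hτ (h ▸ hxC n)
    rcases lt_trichotomy (f1 f (x n)) (f1 f τ) with hcmp | hcmp | hcmp
    · by_cases hle : x n ≤ τ
      · exact Or.inr (Or.inr (Or.inr (Or.inr (Or.inl ⟨lt_of_le_of_ne hle hne, hcmp⟩))))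
      · have hge : ¬ τ ≤ x n := fun h => absurd (f1_mono hf h) (not_le_of_gt hcmp)
        exact Or.inr (Or.inr (Or.inr (Or.inr (Or.inr ⟨hle, hge, hcmp⟩))))
    · by_cases hle : x n ≤ τ
      · exact Or.inr (Or.inr (Or.inl ⟨lt_of_le_of_ne hle hne, hcmp⟩))
      · by_cases hge : τ ≤ x n
        · have : τ < x n := lt_of_le_of_ne hge (Ne.symm hne)
          exact Or.inr (Or.inl ⟨hcmp, f2_lt hf this hcmp.symm⟩)
        · exact Or.inr (Or.inr (Or.inr (Or.inl ⟨hle, hge, hcmp⟩)))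
    · exact Or.inl hcmp
  have hfreq : ∃ᶠ n in atTop, B1 n ∨ B2 n ∨ B3 n ∨ B4 n ∨ B5 n ∨ B6 n :=
    Filter.Frequently.of_forall htot
  rw [frequently_or_distrib, frequently_or_distrib, frequently_or_distrib,
    frequently_or_distrib, frequently_or_distrib] at hfreq
  have hcomp1 : ∀ (φ : ℕ → ℕ), StrictMono φ →
      Tendsto (fun k => f1 f (x (φ k))) atTop (𝓝 (f1 f τ)) := fun φ hφ =>
    h1.comp hφ.tendsto_atTop
  have hcomp2 : ∀ (φ : ℕ → ℕ), StrictMono φ →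
      Tendsto (fun k => f2 f (x (φ k))) atTop (𝓝 (f2 f τ)) := fun φ hφ =>
    h2.comp hφ.tendsto_atTop
  rcases hfreq with h' | h' | h' | h' | h' | h'
  · obtain ⟨φ, hφ, hP⟩ := Filter.extraction_of_frequently_atTop h'
    exact margin1 hf hCb (fun k => hxC (φ k)) hP (hcomp1 φ hφ)
  · obtain ⟨φ, hφ, hP⟩ := Filter.extraction_of_frequently_atTop h'
    exact margin2 hf hCb (fun k => hxC (φ k)) (fun k => (hP k).1) (fun k => (hP k).2)
      (hcomp2 φ hφ)
  · obtain ⟨φ, hφ, hP⟩ := Filter.extraction_of_frequently_atTop h'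
    exact below_eq hf hCL hτ (fun k => hxC (φ k)) (fun k => (hP k).1) (fun k => (hP k).2)
      (hcomp2 φ hφ)
  · obtain ⟨φ, hφ, hP⟩ := Filter.extraction_of_frequently_atTop h'
    exact cutcase hf hg hCb hCL (fun k => hxC (φ k)) (fun k => (hP k).1)
      (fun k => (hP k).2.1) (Or.inl (fun k => (hP k).2.2)) (hcomp1 φ hφ) (hcomp2 φ hφ)
      (fun q hq => (hH q hq).comp hφ.tendsto_atTop)
      (fun q hq => (hh q hq).comp hφ.tendsto_atTop)
  · obtain ⟨φ, hφ, hP⟩ := Filter.extraction_of_frequently_atTop h'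
    exact below_lt hf hCL hmτ (fun k => hxC (φ k)) (fun k => (hP k).1) (fun k => (hP k).2)
      (hcomp1 φ hφ)
  · obtain ⟨φ, hφ, hP⟩ := Filter.extraction_of_frequently_atTop h'
    exact cutcase hf hg hCb hCL (fun k => hxC (φ k)) (fun k => (hP k).1)
      (fun k => (hP k).2.1) (Or.inr (fun k => (hP k).2.2)) (hcomp1 φ hφ) (hcomp2 φ hφ)
      (fun q hq => (hH q hq).comp hφ.tendsto_atTop)
      (fun q hq => (hh q hq).comp hφ.tendsto_atTop)

variable (f g)

/-- The coding of tree elements by countably many real coordinates. -/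
noncomputable def code (t : T) : (Fin 5 ⊕ ℚ ⊕ ℚ) → ℝ := fun i =>
  match i with
  | Sum.inl ⟨0, _⟩ => f1 f t
  | Sum.inl ⟨1, _⟩ => f2 f t
  | Sum.inl ⟨2, _⟩ => g t
  | Sum.inl ⟨3, _⟩ => g (mfun f t)
  | Sum.inl ⟨4, _⟩ => f2 f (mfun f t)
  | Sum.inl ⟨_ + 5, h⟩ => absurd h (by omega)
  | Sum.inr (Sum.inl q) => Hc f g q t
  | Sum.inr (Sum.inr q) => hc f g q t

lemma code_inj (hg : Function.Injective g) : Function.Injective (code f g) := by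
  intro t t' h
  have : code f g t (Sum.inl ⟨2, by omega⟩) = code f g t' (Sum.inl ⟨2, by omega⟩) := by rw [h]
  exact hg this

variable {f g}

/-- The main avoidance lemma: the code of a point outside a closed chain piece,
whose block minimum is also outside, is not in the closure of the codes of the
points related to the piece. -/
lemma avoid (hf : StrictMono f) (hg : Function.Injective g) {b : T} {C : Set T}
    (hCb : ∀ x ∈ C, x ≤ b) (hCL : CLp C) {τ : T} (hτ : τ ∉ C) (hmτ : mfun f τ ∉ C) :
    code f g τ ∉ closure (code f g '' {t' | t' ∈ C ∨ mfun f t' ∈ C}) := by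
  intro hmem
  obtain ⟨w, hwmem, hwtend⟩ := mem_closure_iff_seq_limit.mp hmem
  choose a ha hwa using hwmem
  have hconv : ∀ i, Tendsto (fun n => code f g (a n) i) atTop (𝓝 (code f g τ i)) := by
    intro i
    have h0 : Tendsto (fun n => w n i) atTop (𝓝 (code f g τ i)) :=
      ((continuous_apply i).tendsto _).comp hwtend
    exact h0.congr (fun n => (congrFun (hwa n) i).symm)
  have h1 : Tendsto (fun n => f1 f (a n)) atTop (𝓝 (f1 f τ)) := hconv (Sum.inl ⟨0, by omega⟩)
  have h2 : Tendsto (fun n => f2 f (a n)) atTop (𝓝 (f2 f τ)) := hconv (Sum.inl ⟨1, by omega⟩)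
  have h3 : Tendsto (fun n => g (mfun f (a n))) atTop (𝓝 (g (mfun f τ))) :=
    hconv (Sum.inl ⟨3, by omega⟩)
  have h4 : Tendsto (fun n => f2 f (mfun f (a n))) atTop (𝓝 (f2 f (mfun f τ))) :=
    hconv (Sum.inl ⟨4, by omega⟩)
  have hHt : ∀ q : ℚ, Tendsto (fun n => Hc f g q (a n)) atTop (𝓝 (Hc f g q τ)) :=
    fun q => hconv (Sum.inr (Sum.inl q))
  have hht : ∀ q : ℚ, Tendsto (fun n => hc f g q (a n)) atTop (𝓝 (hc f g q τ)) :=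
    fun q => hconv (Sum.inr (Sum.inr q))
  have hfreq : ∃ᶠ n in atTop, (a n ∈ C ∨ mfun f (a n) ∈ C) :=
    Filter.Frequently.of_forall (fun n => ha n)
  rcases frequently_or_distrib.mp hfreq with h' | h'
  · obtain ⟨φ, hφ, hP⟩ := Filter.extraction_of_frequently_atTop h'
    exact key hf hg hCb hCL hτ hmτ (x := fun k => a (φ k)) hP
      (h1.comp hφ.tendsto_atTop) (h2.comp hφ.tendsto_atTop)
      (fun q _ => (hHt q).comp hφ.tendsto_atTop)
      (fun q _ => (hht q).comp hφ.tendsto_atTop)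
  · obtain ⟨φ, hφ, hP⟩ := Filter.extraction_of_frequently_atTop h'
    have hmm : mfun f (mfun f τ) ∉ C := by rw [mfun_idem]; exact hmτ
    refine key hf hg hCb hCL hmτ hmm (x := fun k => mfun f (a (φ k))) hP ?_ ?_ ?_ ?_
    · have : Tendsto (fun k => f1 f (a (φ k))) atTop (𝓝 (f1 f τ)) :=
        h1.comp hφ.tendsto_atTop
      rw [mfun_f1]
      exact this.congr (fun k => (mfun_f1 f (a (φ k))).symm)
    · exact h4.comp hφ.tendsto_atTop
    · intro q _
      have : Tendsto (fun k => Hc f g q (a (φ k))) atTop (𝓝 (Hc f g q τ)) :=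
        (hHt q).comp hφ.tendsto_atTop
      rw [Hc_mfun]
      exact this.congr (fun k => (Hc_mfun (g := g) (t := a (φ k)) (q := q)).symm)
    · intro q hq
      have hgt : Tendsto (fun k => g (mfun f (a (φ k)))) atTop (𝓝 (g (mfun f τ))) :=
        h3.comp hφ.tendsto_atTop
      have hf2t : Tendsto (fun k => f2 f (mfun f (a (φ k)))) atTop (𝓝 (f2 f (mfun f τ))) :=
        h4.comp hφ.tendsto_atTop
      have hev : ∀ᶠ k in atTop, (q : ℝ) < f2 f (mfun f (a (φ k))) :=
        (tendsto_order.mp hf2t).1 _ hq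
      have hEE : (fun k => g (mfun f (a (φ k)))) =ᶠ[atTop]
          (fun k => hc f g q (mfun f (a (φ k)))) := by
        filter_upwards [hev] with k hk
        rw [hc_mfun, if_pos hk]
      have hτ' : hc f g q (mfun f τ) = g (mfun f τ) := by
        rw [hc_mfun, if_pos hq]
      rw [hτ']
      exact hgt.congr' hEE

end F

section Topo

lemma basic_nbhd {O : Set T} (hO : IsOpen O) {t : T} (ht : t ∈ O) :
    t = ⊥ ∨ ∃ a, a < t ∧ Set.Ioc a t ⊆ O := by
  have hO' : TopologicalSpace.GenerateOpen
      ({S : Set T | ∃ a b : T, S = Set.Ioc a b} ∪ {S : Set T | ∃ b : T, S = Set.Iic b}) O := hO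
  clear hO
  induction hO' with
  | basic s hs =>
    rcases hs with ⟨a, b, rfl⟩ | ⟨b, rfl⟩
    · exact Or.inr ⟨a, ht.1, fun x hx => ⟨hx.1, hx.2.trans ht.2⟩⟩
    · rcases eq_or_ne t ⊥ with rfl | hne
      · exact Or.inl rfl
      · exact Or.inr ⟨⊥, Ne.bot_lt hne, fun x hx => hx.2.trans ht⟩
  | univ =>
    rcases eq_or_ne t ⊥ with rfl | hne
    · exact Or.inl rfl
    · exact Or.inr ⟨⊥, Ne.bot_lt hne, fun x _ => trivial⟩
  | inter s₁ s₂ _ _ ih₁ ih₂ =>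
    rcases ih₁ ht.1 with h | ⟨a₁, ha₁, hs₁⟩
    · exact Or.inl h
    rcases ih₂ ht.2 with h | ⟨a₂, ha₂, hs₂⟩
    · exact Or.inl h
    rcases comparable_of_le ha₁.le ha₂.le with h | h
    · exact Or.inr ⟨a₂, ha₂, fun x hx => ⟨hs₁ ⟨lt_of_le_of_lt h hx.1, hx.2⟩, hs₂ hx⟩⟩
    · exact Or.inr ⟨a₁, ha₁, fun x hx => ⟨hs₁ hx, hs₂ ⟨lt_of_le_of_lt h hx.1, hx.2⟩⟩⟩
  | sUnion S hS ih =>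
    obtain ⟨s, hs, hts⟩ := ht
    rcases ih s hs hts with h | ⟨a, ha, hsub⟩
    · exact Or.inl h
    · exact Or.inr ⟨a, ha, fun x hx => ⟨s, hs, hsub hx⟩⟩

lemma isOpen_Iic' (c : T) : IsOpen (Set.Iic c) := by
  exact TopologicalSpace.GenerateOpen.basic _ (Or.inr ⟨c, rfl⟩)

lemma CLp_of_isClosed {C : Set T} (hC : IsClosed C) : CLp C := by
  intro t ht
  rcases basic_nbhd hC.isOpen_compl (by exact ht : t ∈ Cᶜ) with h | ⟨a, ha, hsub⟩
  · exact Or.inl h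
  · exact Or.inr ⟨a, ha, fun x hx1 hx2 => hsub ⟨hx1, hx2⟩⟩

lemma CLp_inter_Iic {C : Set T} (hCL : CLp C) (c : T) : CLp (C ∩ Set.Iic c) := by
  intro t ht
  by_cases htC : t ∈ C
  · have htc : ¬ t ≤ c := fun h => ht ⟨htC, h⟩
    refine Or.inr ⟨t ⊓ c, lt_of_le_of_ne inf_le_left (fun h => htc (by
      rw [← h]; exact inf_le_right)), fun x hx1 hx2 hx3 => ?_⟩
    exact absurd (le_inf hx2 hx3.2) (not_le_of_gt hx1)
  · rcases hCL t htC with h | ⟨a, ha, hsub⟩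
    · exact Or.inl h
    · exact Or.inr ⟨a, ha, fun x hx1 hx2 hx3 => hsub x hx1 hx2 hx3.1⟩

end Topo

end TreeProof

open TreeProof in
/-- If a tree `T` of cardinality at most the continuum is embeddable into the
lexicographic product `ℝ ×ₗ ℝ`, then its one-point compactification is `3`-determined. -/
theorem threeDetermined_of_lexEmbeddable {T : Type u} [TreeOrder T]
    (f : T → ℝ ×ₗ ℝ) (hf : StrictMono f) (hT : Cardinal.mk T ≤ Cardinal.continuum.{u}) :
    NDetermined 3 (OnePoint T) := by
  classical
  -- an injection of `T` into `ℝ`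
  have h1 : Cardinal.mk T ≤ Cardinal.mk (ULift.{u} ℝ) := by
    rw [Cardinal.mk_uLift, Cardinal.mk_real, Cardinal.lift_continuum]
    exact hT
  obtain ⟨e⟩ := (Cardinal.le_def _ _).mp h1
  set g : T → ℝ := fun t => (e t).down with hgdef
  have hg : Function.Injective g := fun a b h => e.injective (ULift.down_injective h)
  set c : T → ((Fin 5 ⊕ ℚ ⊕ ℚ) → ℝ) := code f g with hcdef
  let S₀ : Type := {v : (Fin 5 ⊕ ℚ ⊕ ℚ) → ℝ // v ∈ Set.range c}
  haveI : SecondCountableTopology (ULift.{u} S₀) :=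
    (Homeomorph.ulift (X := S₀)).isInducing.secondCountableTopology
  set pt : ULift.{u} S₀ → T := fun s => (s.down.2).choose with hptdef
  have hpt : ∀ s : ULift.{u} S₀, c (pt s) = s.down.1 := fun s => (s.down.2).choose_spec
  have hptc : ∀ t : T, pt (ULift.up ⟨c t, Set.mem_range_self t⟩) = t := by
    intro t
    exact code_inj f g hg (hpt (ULift.up ⟨c t, Set.mem_range_self t⟩))
  set Φ : ULift.{u} S₀ → Set (OnePoint T) :=
    fun s => {↑(pt s), ↑(mfun f (pt s)), OnePoint.infty} with hΦdef
  refine ⟨ULift.{u} S₀, inferInstance, inferInstance, Φ, fun s => ?_, ?_, ?_⟩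
  · refine ⟨⟨_, Set.mem_insert _ _⟩, ?_, ?_⟩
    · exact ((Set.finite_singleton _).insert _).insert _
    · refine (Set.ncard_insert_le _ _).trans ?_
      have h2 := Set.ncard_insert_le (α := OnePoint T) (↑(mfun f (pt s))) {OnePoint.infty}
      have h3 : ({OnePoint.infty} : Set (OnePoint T)).ncard = 1 := Set.ncard_singleton _
      omega
  · -- upper semicontinuity
    intro s V hV hsub
    have hOnePoint.inftyV : OnePoint.infty ∈ V := hsub (by simp [hΦdef])
    have hτV : (↑(pt s) : OnePoint T) ∈ V := hsub (Set.mem_insert _ _)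
    have hmτV : (↑(mfun f (pt s)) : OnePoint T) ∈ V :=
      hsub (Set.mem_insert_of_mem _ (Set.mem_insert _ _))
    obtain ⟨hVcomp, hVopen⟩ := (OnePoint.isOpen_iff_of_mem' hOnePoint.inftyV).mp hV
    set C : Set T := (((↑) : T → OnePoint T) ⁻¹' V)ᶜ with hCdef
    have hCL : CLp C := CLp_of_isClosed hVopen.isClosed_compl
    have hcov : C ⊆ ⋃ y ∈ C, Set.Iic y := fun x hx =>
      Set.mem_biUnion hx (Set.mem_Iic.mpr le_rfl)
    obtain ⟨F, hFC, hFfin, hFcov⟩ :=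
      hVcomp.elim_finite_subcover_image (fun y _ => isOpen_Iic' y) hcov
    have hτC : pt s ∉ C := fun h => h hτV
    have hmτC : mfun f (pt s) ∉ C := fun h => h hmτV
    set Aset : T → Set T :=
      fun y => {t' | t' ∈ C ∩ Set.Iic y ∨ mfun f t' ∈ C ∩ Set.Iic y} with hAdef
    set U : Set (ULift.{u} S₀) :=
      (fun s' : ULift.{u} S₀ => (s'.down.1 : (Fin 5 ⊕ ℚ ⊕ ℚ) → ℝ)) ⁻¹'
        (⋂ y ∈ F, (closure (c '' Aset y))ᶜ) with hUdef
    have hUopen : IsOpen U := by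
      refine (hFfin.isOpen_biInter (fun y _ => isClosed_closure.isOpen_compl)).preimage ?_
      exact continuous_subtype_val.comp continuous_uliftDown
    have havoid : ∀ s'' : ULift.{u} S₀, pt s'' ∉ C → mfun f (pt s'') ∉ C → s'' ∈ U := by
      intro s'' h1' h2'
      refine Set.mem_preimage.mpr (Set.mem_iInter₂.mpr (fun y hy => ?_))
      have := avoid (b := y) hf hg (C := C ∩ Set.Iic y) (fun x hx => hx.2)
        (CLp_inter_Iic hCL y) (τ := pt s'') (fun h => h1' h.1) (fun h => h2' h.1)
      rw [← hpt s'']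
      exact this
    have hmem : ∀ s'' : ULift.{u} S₀, s'' ∈ U → ∀ t' : T, t' ∈ C → pt s'' ≠ t' ∧
        mfun f (pt s'') ≠ t' := by
      intro s'' hs'' t' ht'
      obtain ⟨y, hyF, hyle⟩ := Set.mem_iUnion₂.mp (hFcov ht')
      have hnc : s''.down.1 ∉ closure (c '' Aset y) :=
        Set.mem_iInter₂.mp (Set.mem_preimage.mp hs'') y hyF
      constructor
      · rintro rfl
        exact hnc (subset_closure ⟨pt s'', Or.inl ⟨ht', hyle⟩, (hpt s'')⟩)
      · rintro rfl
        exact hnc (subset_closure ⟨pt s'', Or.inr ⟨ht', hyle⟩, (hpt s'')⟩)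
    refine ⟨U, hUopen, havoid s hτC hmτC, ?_⟩
    intro s' hs' z hz
    have hget : ∀ t' : T, t' ∈ C → pt s' ≠ t' ∧ mfun f (pt s') ≠ t' := hmem s' hs'
    rcases hz with rfl | hz
    · by_contra hzV
      exact (hget (pt s') hzV).1 rfl
    rcases hz with rfl | hz
    · by_contra hzV
      exact (hget (mfun f (pt s')) hzV).2 rfl
    · rcases hz with rfl
      exact hOnePoint.inftyV
  · -- the union covers everything
    rw [Set.eq_univ_iff_forall]
    intro z
    rw [Set.mem_iUnion]
    cases z with
    | infty =>
      exact ⟨ULift.up ⟨c ⊥, Set.mem_range_self ⊥⟩,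
        Set.mem_insert_of_mem _ (Set.mem_insert_of_mem _ rfl)⟩
    | coe t =>
      refine ⟨ULift.up ⟨c t, Set.mem_range_self t⟩, ?_⟩
      have := hptc t
      exact Set.mem_insert_iff.mpr (Or.inl (by rw [this]))
end

section
/- There exists a 2-fibered Rosenthal compactification K₀ of the tree wQ whose remainder K₀ \ wQ is homeomorphic to the Cantor set. -/
open Filter Topology Set

universe u v

/-- A real-valued function is of Baire class one if it is a pointwise limit of a
sequence of continuous functions. -/
def BaireClassOne {P : Type*} [TopologicalSpace P] (f : P → ℝ) : Prop :=
  ∃ g : ℕ → P → ℝ, (∀ n, Continuous (g n)) ∧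
    ∀ x, Filter.Tendsto (fun n => g n x) Filter.atTop (nhds (f x))

/-- A Rosenthal compact: a compact space homeomorphic to a subspace of the space
`B₁(P)` of Baire class one functions on a Polish space `P`, with the pointwise topology. -/
def IsRosenthal (K : Type u) [TopologicalSpace K] : Prop :=
  CompactSpace K ∧
    ∃ (P : Type) (_ : TopologicalSpace P) (_ : PolishSpace P) (F : Set (P → ℝ)),
      (∀ f ∈ F, BaireClassOne f) ∧ Nonempty (K ≃ₜ F)

/-- A compact space `K` is `n`-fibered if there is a continuous map onto a second
countable space all of whose fibers have at most `n` points. -/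
def NFibered (n : ℕ) (K : Type u) [TopologicalSpace K] : Prop :=
  ∃ (S : Type u) (_ : TopologicalSpace S) (_ : SecondCountableTopology S) (f : K → S),
    Continuous f ∧ ∀ y : S, (f ⁻¹' {y}).Finite ∧ (f ⁻¹' {y}).ncard ≤ n

/-- `s` is an initial segment of `t` (as subsets of `ℚ`): `s ⊆ t` and every element
of `t \ s` lies above every element of `s`. -/
def QInitSeg (s t : Set ℚ) : Prop :=
  s ⊆ t ∧ ∀ x ∈ s, ∀ y ∈ t, y ∉ s → x ≤ y

theorem QInitSeg.refl (s : Set ℚ) : QInitSeg s s :=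
  ⟨subset_rfl, fun _ _ y hy hyn => absurd hy hyn⟩

theorem QInitSeg.trans' {s t u : Set ℚ} (h1 : QInitSeg s t) (h2 : QInitSeg t u) :
    QInitSeg s u := by
  refine ⟨h1.1.trans h2.1, fun x hx y hy hyn => ?_⟩
  by_cases hyt : y ∈ t
  · exact h1.2 x hx y hyt hyn
  · exact h2.2 x (h1.1 hx) y hy hyt

theorem QInitSeg.antisymm' {s t : Set ℚ} (h1 : QInitSeg s t) (h2 : QInitSeg t s) : s = t :=
  Set.Subset.antisymm h1.1 h2.1

/-- The tree `wℚ` of all well-ordered subsets of `ℚ`. -/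
def wQ : Type := {s : Set ℚ // s.IsWF}

/-- `wℚ` is ordered by "being an initial segment". -/
instance : PartialOrder wQ where
  le s t := QInitSeg s.1 t.1
  le_refl s := QInitSeg.refl s.1
  le_trans _ _ _ h1 h2 := QInitSeg.trans' h1 h2
  le_antisymm _ _ h1 h2 := Subtype.ext (QInitSeg.antisymm' h1 h2)

instance : TopologicalSpace wQ := intervalTopology wQ

/-! ### auxiliary development -/

attribute [local instance] Classical.propDecidable

namespace wQaux

lemma le_def {s t : wQ} : s ≤ t ↔ QInitSeg s.1 t.1 := Iff.rfl

lemma subset_of_le {s t : wQ} (h : s ≤ t) : s.1 ⊆ t.1 := h.1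

/-- initial segments of a common set: smaller is initial in bigger -/
lemma initSeg_of_subset {s t x : Set ℚ} (hs : QInitSeg s x) (ht : QInitSeg t x)
    (hst : s ⊆ t) : QInitSeg s t :=
  ⟨hst, fun p hp q hq hqn => hs.2 p hp q (ht.1 hq) hqn⟩

/-- two initial segments of a common set are comparable -/
lemma initSeg_comparable {s t x : Set ℚ} (hs : QInitSeg s x) (ht : QInitSeg t x) :
    s ⊆ t ∨ t ⊆ s := by
  by_cases h : s ⊆ t
  · exact Or.inl h
  · right
    obtain ⟨p, hps, hpt⟩ := not_subset.1 h
    intro q hq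
    by_contra hqs
    have h1 : p ≤ q := hs.2 p hps q (ht.1 hq) hqs
    have h2 : q ≤ p := ht.2 q hq p (hs.1 hps) hpt
    have : p = q := le_antisymm h1 h2
    exact hpt (this ▸ hq)

lemma le_total_of_le {x y b : wQ} (hx : x ≤ b) (hy : y ≤ b) : x ≤ y ∨ y ≤ x := by
  rcases initSeg_comparable (x := b.1) hx hy with h | h
  · exact Or.inl (initSeg_of_subset hx hy h)
  · exact Or.inr (initSeg_of_subset hy hx h)

/-- truncation below p -/
def trunc (s : wQ) (p : ℚ) : wQ := ⟨s.1 ∩ Set.Iio p, s.2.mono inter_subset_left⟩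

lemma trunc_le (s : wQ) (p : ℚ) : trunc s p ≤ s := by
  refine ⟨inter_subset_left, fun a ha b hb hbn => ?_⟩
  have : ¬ b < p := fun hlt => hbn ⟨hb, hlt⟩
  exact le_trans (le_of_lt ha.2) (not_lt.1 this)

lemma trunc_ne (s : wQ) {p : ℚ} (hp : p ∈ s.1) : trunc s p ≠ s := by
  intro h
  have : p ∈ (trunc s p).1 := by rw [h]; exact hp
  exact absurd this.2 (lt_irrefl p)

/-- key: anything strictly between `trunc s p` and `s` contains `p` -/
lemma mem_of_trunc_lt {s x : wQ} {p : ℚ} (hp : p ∈ s.1)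
    (h1 : trunc s p ≤ x) (hne : x ≠ trunc s p) (h2 : x ≤ s) : p ∈ x.1 := by
  have hsub : (trunc s p).1 ⊆ x.1 := h1.1
  have : ∃ w, w ∈ x.1 ∧ w ∉ (trunc s p).1 := by
    by_contra h
    push_neg at h
    exact hne (le_antisymm (le_def.2 ⟨h, fun a _ b hb hbn => absurd (hsub hb) hbn⟩) h1)
  obtain ⟨w, hwx, hwt⟩ := this
  have hws : w ∈ s.1 := h2.1 hwx
  have hpw : p ≤ w := not_lt.1 (fun hlt => hwt ⟨hws, hlt⟩)
  by_contra hpx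
  have := h2.2 w hwx p hp hpx
  have hwp : w = p := le_antisymm this hpw
  exact hpx (hwp ▸ hwx)


/-! ### meets -/

def meet (x t : wQ) : wQ :=
  ⟨{p | p ∈ x.1 ∧ p ∈ t.1 ∧ ∀ q, q ≤ p → (q ∈ x.1 ↔ q ∈ t.1)}, x.2.mono (fun p hp => hp.1)⟩

lemma meet_le_left (x t : wQ) : meet x t ≤ x := by
  refine ⟨fun p hp => hp.1, fun p hp b hb hbn => ?_⟩
  by_contra hc
  have hblt : b < p := not_le.1 hc
  have hbt : b ∈ t.1 := (hp.2.2 b hblt.le).1 hb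
  exact hbn ⟨hb, hbt, fun q hq => hp.2.2 q (hq.trans hblt.le)⟩

lemma meet_le_right (x t : wQ) : meet x t ≤ t := by
  have h : meet x t = meet t x := by
    apply Subtype.ext
    ext p
    constructor <;> rintro ⟨h1, h2, h3⟩ <;> exact ⟨h2, h1, fun q hq => (h3 q hq).symm⟩
  rw [h]; exact meet_le_left t x

lemma le_meet {y x t : wQ} (hx : y ≤ x) (ht : y ≤ t) : y ≤ meet x t := by
  have hsub : y.1 ⊆ (meet x t).1 := by
    intro p hp
    refine ⟨hx.1 hp, ht.1 hp, fun q hq => ?_⟩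
    by_cases hqy : q ∈ y.1
    · exact ⟨fun _ => ht.1 hqy, fun _ => hx.1 hqy⟩
    · constructor
      · intro hqx
        have := hx.2 p hp q hqx hqy
        have : q = p := le_antisymm hq this
        exact absurd (this ▸ hqy) (fun h => h hp)
      · intro hqt
        have := ht.2 p hp q hqt hqy
        have : q = p := le_antisymm hq this
        exact absurd (this ▸ hqy) (fun h => h hp)
  exact initSeg_of_subset hx (meet_le_left x t) hsub

/-! ### topology -/

def Gens : Set (Set wQ) :=
  ({S : Set wQ | ∃ a b : wQ, S = Set.Ioc a b} ∪ {S : Set wQ | ∃ b : wQ, S = Set.Iic b})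

lemma topo_eq : (inferInstance : TopologicalSpace wQ) = TopologicalSpace.generateFrom Gens := rfl

lemma isOpen_gen {S : Set wQ} (h : S ∈ Gens) : IsOpen S := by
  exact TopologicalSpace.GenerateOpen.basic S h

lemma isOpen_Iic (b : wQ) : IsOpen (Set.Iic b) := isOpen_gen (Or.inr ⟨b, rfl⟩)

lemma isOpen_Ioc (a b : wQ) : IsOpen (Set.Ioc a b) := isOpen_gen (Or.inl ⟨a, b, rfl⟩)

lemma isClosed_Iic (b : wQ) : IsClosed (Set.Iic b) := by
  rw [← isOpen_compl_iff, isOpen_iff_forall_mem_open]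
  intro x hx
  refine ⟨Set.Ioc (meet x b) x, ?_, isOpen_Ioc _ _, ?_, le_refl x⟩
  · rintro y ⟨hy1, hy2⟩ (hyb : y ≤ b)
    exact hy1.not_ge (le_meet hy2 hyb)
  · refine lt_of_le_of_ne (meet_le_left x b) ?_
    intro h
    exact hx (h ▸ meet_le_right x b)

lemma isOpen_memCoord (q : ℚ) : IsOpen {s : wQ | q ∈ s.1} := by
  rw [isOpen_iff_forall_mem_open]
  intro s hs
  refine ⟨Set.Ioc (trunc s q) s, ?_, isOpen_Ioc _ _, ?_, le_refl s⟩
  · rintro y ⟨hy1, hy2⟩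
    exact mem_of_trunc_lt hs hy1.le hy1.ne' hy2
  · exact lt_of_le_of_ne (trunc_le s q) (trunc_ne s hs)

lemma isClosed_memCoord (q : ℚ) : IsClosed {s : wQ | q ∈ s.1} := by
  rw [← isOpen_compl_iff, isOpen_iff_forall_mem_open]
  intro s hs
  exact ⟨Set.Iic s, fun y (hy : y ≤ s) hq => hs (hy.1 hq), isOpen_Iic s, le_refl s⟩

/-! ### well-foundedness helpers -/

lemma not_isWF_of_descending {s : Set ℚ} (f : ℕ → ℚ) (hf : StrictAnti f)
    (h : ∀ n, f n ∈ s) : ¬ s.IsWF := by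
  intro hs
  have hr : Set.range f ⊆ s := range_subset_iff.2 h
  have hwf := hs.mono hr
  have hne : (Set.range f).Nonempty := ⟨f 0, mem_range_self 0⟩
  obtain ⟨n, hn⟩ := hwf.min_mem hne
  exact hwf.not_lt_min hne (mem_range_self (n + 1)) (hn ▸ hf (Nat.lt_succ_self n))

lemma eventually_not_mem_of_descending {t : Set ℚ} (ht : t.IsWF) {d : ℕ → ℚ}
    (hd : StrictAnti d) : ∀ᶠ n in atTop, d n ∉ t := by
  rw [eventually_atTop]
  by_contra h
  push_neg at h
  choose g hg1 hg2 using h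
  let F : ℕ → ℕ := fun k => Nat.rec (g 0) (fun _ m => g (m + 1)) k
  have hFmem : ∀ k, d (F k) ∈ t := by
    intro k
    cases k with
    | zero => exact hg2 0
    | succ n => exact hg2 _
  have hFmono : StrictMono F :=
    strictMono_nat_of_lt_succ (fun n => lt_of_lt_of_le (Nat.lt_succ_self _) (hg1 _))
  exact not_isWF_of_descending (d ∘ F) (hd.comp_strictMono hFmono) (fun n => hFmem n) ht

/-! ### the maximal well-ordered initial segment of an arbitrary set -/

def TmaxSet (x : Set ℚ) : Set ℚ := ⋃₀ {y | y.IsWF ∧ QInitSeg y x}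

lemma TmaxSet_isWF (x : Set ℚ) : (TmaxSet x).IsWF := by
  by_contra h
  rw [Set.isWF_iff_no_descending_seq] at h
  push_neg at h
  obtain ⟨f, hf, hmem⟩ := h
  obtain ⟨y₀, ⟨hy₀wf, hy₀init⟩, hf0⟩ := hmem 0
  have hally : ∀ n, f n ∈ y₀ := by
    intro n
    rcases Nat.eq_zero_or_pos n with h0 | hpos
    · rwa [h0]
    obtain ⟨yn, ⟨hynwf, hyninit⟩, hfn⟩ := hmem n
    rcases initSeg_comparable hyninit hy₀init with hsub | hsub
    · exact hsub hfn
    · by_contra hfn0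
      have := (initSeg_of_subset hy₀init hyninit hsub).2 (f 0) hf0 (f n) hfn hfn0
      exact absurd (hf hpos) (not_lt.2 this)
  exact not_isWF_of_descending f hf hally hy₀wf

def Tmax (x : Set ℚ) : wQ := ⟨TmaxSet x, TmaxSet_isWF x⟩

lemma qinitseg_TmaxSet (x : Set ℚ) : QInitSeg (TmaxSet x) x := by
  constructor
  · rintro p ⟨y, ⟨_, hyi⟩, hp⟩
    exact hyi.1 hp
  · rintro p ⟨y, ⟨_, hyi⟩, hp⟩ w hw hwn
    exact hyi.2 p hp w hw (fun hwy => hwn ⟨y, ⟨‹_›, hyi⟩, hwy⟩)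

lemma le_Tmax_iff {s : wQ} {x : Set ℚ} : s ≤ Tmax x ↔ QInitSeg s.1 x := by
  constructor
  · intro h
    exact QInitSeg.trans' h (qinitseg_TmaxSet x)
  · intro h
    refine ⟨fun p hp => ⟨s.1, ⟨s.2, h⟩, hp⟩, fun p hp w hw hwn => ?_⟩
    obtain ⟨y, ⟨hywf, hyi⟩, hwy⟩ := hw
    exact h.2 p hp w (hyi.1 hwy) hwn

lemma Tmax_coe (t : wQ) : Tmax t.1 = t := by
  apply Subtype.ext
  apply Set.Subset.antisymm
  · exact (qinitseg_TmaxSet t.1).1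
  · exact (le_Tmax_iff.2 (QInitSeg.refl t.1)).1

/-! ### compactness of initial chains -/

lemma nhds_eq (a : wQ) : 𝓝 a = ⨅ s ∈ {s | a ∈ s ∧ s ∈ Gens}, 𝓟 s :=
  TopologicalSpace.nhds_generateFrom

lemma isCompact_Iic (b : wQ) : IsCompact (Set.Iic b) := by
  rw [isCompact_iff_ultrafilter_le_nhds']
  intro U hU
  set sS : wQ := ⟨{p | p ∈ b.1 ∧ {x : wQ | p ∈ x.1} ∈ U}, b.2.mono (fun p hp => hp.1)⟩ with hsS
  -- sS ≤ b
  have hsSb : sS ≤ b := by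
    refine ⟨fun p hp => hp.1, fun p hp y hy hyn => ?_⟩
    by_contra hc
    have hylt : y < p := not_le.1 hc
    have : (Set.Iic b ∩ {x : wQ | p ∈ x.1}) ⊆ {x : wQ | y ∈ x.1} := by
      rintro x ⟨hxb, hpx⟩
      by_contra hyx
      exact absurd (hxb.2 p hpx y hy hyx) (not_le.2 hylt)
    have : {x : wQ | y ∈ x.1} ∈ U := Filter.mem_of_superset (Filter.inter_mem hU hp.2) this
    exact hyn ⟨hy, this⟩
  -- Iic sS ∈ U
  have hIic : Set.Iic sS ∈ U := by
    by_cases hsb : sS = b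
    · rw [hsb]; exact hU
    have hne : (b.1 \ sS.1).Nonempty := by
      rw [Set.diff_nonempty]
      intro hsub
      exact hsb (le_antisymm hsSb (initSeg_of_subset (QInitSeg.refl b.1) hsSb hsub))
    have hwf : (b.1 \ sS.1).IsWF := b.2.mono diff_subset
    set q₀ := hwf.min hne with hq₀
    have hq₀mem : q₀ ∈ b.1 \ sS.1 := hwf.min_mem hne
    have hq₀notU : {x : wQ | q₀ ∈ x.1} ∉ U := fun h => hq₀mem.2 ⟨hq₀mem.1, h⟩
    have hcompl : {x : wQ | q₀ ∈ x.1}ᶜ ∈ U := (Ultrafilter.compl_mem_iff_notMem).2 hq₀notU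
    refine Filter.mem_of_superset (Filter.inter_mem hU hcompl) ?_
    rintro x ⟨hxb, hq₀x⟩
    have hsub : x.1 ⊆ sS.1 := by
      intro w hwx
      by_contra hwsS
      have hwb : w ∈ b.1 := hxb.1 hwx
      have hq₀w : q₀ ≤ w := le_of_not_gt (hwf.not_lt_min hne ⟨hwb, hwsS⟩)
      have : q₀ ∈ x.1 := by
        by_contra hq₀x'
        have := hxb.2 w hwx q₀ hq₀mem.1 hq₀x'
        have : w = q₀ := le_antisymm this hq₀w
        exact hq₀x' (this ▸ hwx)
      exact hq₀x this
    exact initSeg_of_subset hxb hsSb hsub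
  -- converges
  refine ⟨sS, hsSb, ?_⟩
  rw [nhds_eq]
  refine le_iInf₂ ?_
  rintro S ⟨hmem, hgen⟩
  rw [Filter.le_principal_iff]
  rcases hgen with ⟨a, c, rfl⟩ | ⟨c, rfl⟩
  · -- Ioc a c
    obtain ⟨hasS, hsSc⟩ := hmem
    have hnea : (sS.1 \ a.1).Nonempty := by
      rw [Set.diff_nonempty]
      intro hsub
      exact hasS.ne (Subtype.ext (Set.Subset.antisymm hasS.le.1 hsub))
    have hwfa : (sS.1 \ a.1).IsWF := sS.2.mono diff_subset
    obtain ⟨p, hpsS, hpa⟩ := hnea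
    have hpU : {x : wQ | p ∈ x.1} ∈ U := hpsS.2
    refine Filter.mem_of_superset (Filter.inter_mem hIic hpU) ?_
    rintro x ⟨(hxsS : x ≤ sS), hpx⟩
    refine ⟨?_, le_trans hxsS hsSc⟩
    have hxna : ¬ x ≤ a := fun h => hpa (h.1 hpx)
    rcases le_total_of_le hxsS hasS.le with h | h
    · exact absurd h hxna
    · exact lt_of_le_of_ne h (fun he => hxna (he ▸ le_refl a))
  · -- Iic c
    exact Filter.mem_of_superset hIic (fun x (hx : x ≤ sS) => le_trans hx hmem)

/-! ### the embedding into a product of Cantor cubes -/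

abbrev XX : Type := (ℚ → Bool) × (wQ → Bool)

noncomputable def chi (s : wQ) : ℚ → Bool := fun q => decide (q ∈ s.1)

noncomputable def upSet (s : wQ) : wQ → Bool := fun t => decide (s ≤ t)

noncomputable def emb (s : wQ) : XX := (chi s, upSet s)

def zeroF : wQ → Bool := fun _ => false

lemma chi_injective : Function.Injective chi := by
  intro s t h
  apply Subtype.ext
  ext q
  constructor <;> intro hq
  · have := congrFun h q
    simp only [chi, hq, decide_eq_true_eq] at this
    simpa using this.symm
  · have := congrFun h q
    simp only [chi, hq, decide_eq_true_eq] at this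
    simpa using this

lemma continuous_chi : Continuous chi := by
  refine continuous_pi (fun q => ?_)
  rw [continuous_discrete_rng]
  intro b
  cases b
  · have : (fun s => chi s q) ⁻¹' {false} = {s : wQ | q ∈ s.1}ᶜ := by
      ext s; simp [chi]
    rw [this]
    exact (isClosed_memCoord q).isOpen_compl
  · have : (fun s => chi s q) ⁻¹' {true} = {s : wQ | q ∈ s.1} := by
      ext s; simp [chi]
    rw [this]
    exact isOpen_memCoord q

lemma continuous_upSet : Continuous upSet := by
  refine continuous_pi (fun t => ?_)
  rw [continuous_discrete_rng]
  intro b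
  cases b
  · have : (fun s => upSet s t) ⁻¹' {false} = (Set.Iic t)ᶜ := by
      ext s; simp [upSet, Set.mem_Iic]
    rw [this]
    exact (isClosed_Iic t).isOpen_compl
  · have : (fun s => upSet s t) ⁻¹' {true} = Set.Iic t := by
      ext s; simp [upSet, Set.mem_Iic]
    rw [this]
    exact isOpen_Iic t

lemma continuous_emb : Continuous emb := continuous_chi.prodMk continuous_upSet

lemma emb_injective : Function.Injective emb := by
  intro s t h
  have h2 := congrArg Prod.snd h
  have hst : s ≤ t := by
    have := congrFun h2 t
    simp only [emb, upSet] at this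
    rw [decide_eq_true (le_refl t)] at this
    exact of_decide_eq_true this
  have hts : t ≤ s := by
    have := congrFun h2 s
    simp only [emb, upSet] at this
    rw [decide_eq_true (le_refl s)] at this
    exact of_decide_eq_true this.symm
  exact le_antisymm hst hts

lemma isEmbedding_emb : IsEmbedding emb := by
  refine ⟨⟨le_antisymm (continuous_iff_le_induced.1 continuous_emb) (le_generateFrom ?_)⟩,
    emb_injective⟩
  rintro S (⟨a, c, rfl⟩ | ⟨c, rfl⟩)
  · rw [isOpen_induced_iff]
    by_cases hac : a ≤ c
    · refine ⟨{p : XX | p.2 c = true ∧ p.2 a = false}, ?_, ?_⟩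
      · show IsOpen ((fun p : XX => p.2 c) ⁻¹' {true} ∩ (fun p : XX => p.2 a) ⁻¹' {false})
        have hc : Continuous (fun p : XX => p.2 c) := (continuous_apply c).comp continuous_snd
        have ha : Continuous (fun p : XX => p.2 a) := (continuous_apply a).comp continuous_snd
        exact ((isOpen_discrete _).preimage hc).inter ((isOpen_discrete _).preimage ha)
      · ext s
        simp only [Set.mem_preimage, Set.mem_setOf_eq, Set.mem_Ioc, emb, upSet,
          decide_eq_true_eq]
        constructor
        · rintro ⟨h1, h2⟩
          have hna : ¬ s ≤ a := by
            intro h; rw [decide_eq_true h] at h2; exact Bool.noConfusion h2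
          rcases le_total_of_le h1 hac with h | h
          · exact absurd h hna
          · exact ⟨lt_of_le_of_ne h (fun he => hna (he ▸ le_refl a)), h1⟩
        · rintro ⟨h1, h2⟩
          exact ⟨h2, decide_eq_false h1.not_ge⟩
    · refine ⟨∅, isOpen_empty, ?_⟩
      rw [Set.preimage_empty]
      symm
      rw [Set.eq_empty_iff_forall_notMem]
      rintro x ⟨h1, h2⟩
      exact hac (le_trans h1.le h2)
  · rw [isOpen_induced_iff]
    refine ⟨{p : XX | p.2 c = true}, ?_, ?_⟩
    · show IsOpen ((fun p : XX => p.2 c) ⁻¹' {true})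
      have hc : Continuous (fun p : XX => p.2 c) := (continuous_apply c).comp continuous_snd
      exact (isOpen_discrete _).preimage hc
    · ext s
      simp [emb, upSet, Set.mem_Iic]

/-! ### the compactification -/

def Kset : Set XX := closure (Set.range emb)

lemma emb_mem_Kset (s : wQ) : emb s ∈ Kset := subset_closure (mem_range_self s)

lemma isCompact_Kset : IsCompact Kset := isClosed_closure.isCompact

lemma mem_Kset_elim {p : XX} (hp : p ∈ Kset) : p ∈ Set.range emb ∨ p.2 = zeroF := by
  by_cases h : p.2 = zeroF
  · exact Or.inr h
  left
  have : ∃ t0, p.2 t0 = true := by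
    by_contra hc
    push_neg at hc
    exact h (funext fun t => by
      cases htb : p.2 t
      · rfl
      · exact absurd htb (hc t))
  obtain ⟨t0, ht0⟩ := this
  obtain ⟨u, hur, hule⟩ := mem_closure_iff_ultrafilter.1 hp
  set V := u.comap emb_injective hur with hVdef
  have hV : Filter.Tendsto emb ↑V (𝓝 p) := by
    rw [Filter.Tendsto, hVdef, Ultrafilter.coe_comap, Filter.map_comap_of_mem hur]
    exact hule
  have hcont2 : Continuous (fun q : XX => q.2 t0) := (continuous_apply t0).comp continuous_snd
  have htd : Filter.Tendsto (fun s : wQ => (emb s).2 t0) ↑V (𝓝 true) := by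
    have := (hcont2.tendsto p).comp hV
    rwa [ht0] at this
  have hIic : Set.Iic t0 ∈ V := by
    have hmem : ({true} : Set Bool) ∈ 𝓝 true := (isOpen_discrete _).mem_nhds rfl
    have := htd hmem
    rw [Filter.mem_map] at this
    have hset : (fun s : wQ => (emb s).2 t0) ⁻¹' {true} = Set.Iic t0 := by
      ext s
      simp [emb, upSet, Set.mem_Iic]
    rw [hset] at this
    exact this
  obtain ⟨sS, _, hsSle⟩ := (isCompact_Iic t0).ultrafilter_le_nhds' V hIic
  have := tendsto_nhds_unique hV ((continuous_emb.tendsto sS).mono_left hsSle)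
  exact this ▸ mem_range_self sS

/-! ### remainder points -/

noncomputable def eqQ : ℕ ≃ ℚ := (Denumerable.eqv ℚ).symm

noncomputable def dd : ℕ → ℚ := fun n => -(n : ℚ) - 1

lemma dd_strictAnti : StrictAnti dd := by
  intro a b hab
  simp only [dd]
  have : (a : ℚ) < b := by exact_mod_cast hab
  linarith

noncomputable def seq (g : ℚ → Bool) (n : ℕ) : wQ :=
  ⟨{q | g q = true ∧ eqQ.symm q < n} ∪ {dd n}, by
    apply Set.Finite.isWF
    refine Set.Finite.union ?_ (Set.finite_singleton _)
    refine Set.Finite.subset ((Set.finite_Iio n).image eqQ) ?_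
    rintro q ⟨_, hq⟩
    exact ⟨eqQ.symm q, hq, by simp⟩⟩

lemma tendsto_seq (g : ℚ → Bool) :
    Filter.Tendsto (fun n => emb (seq g n)) atTop (𝓝 ((g, zeroF) : XX)) := by
  refine Filter.Tendsto.prodMk_nhds ?_ ?_
  · rw [tendsto_pi_nhds]
    intro q
    obtain ⟨m, hm⟩ := exists_nat_gt (-q - 1)
    refine Filter.Tendsto.congr' ?_ tendsto_const_nhds
    rw [Filter.EventuallyEq, eventually_atTop]
    refine ⟨max m (eqQ.symm q + 1), fun n hn => ?_⟩
    have hn1 : m ≤ n := le_trans (le_max_left _ _) hn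
    have hn2 : eqQ.symm q < n := lt_of_lt_of_le (Nat.lt_of_lt_of_le (Nat.lt_succ_self _)
      (le_max_right _ _)) hn
    have hdd : dd n < q := by
      have h1 : (m : ℚ) ≤ n := by exact_mod_cast hn1
      have : -q - 1 < (n : ℚ) := lt_of_lt_of_le hm h1
      simp only [dd]
      linarith
    have hqmem : q ∈ (seq g n).1 ↔ g q = true := by
      simp only [seq, Set.mem_union, Set.mem_setOf_eq, Set.mem_singleton_iff]
      constructor
      · rintro (⟨h, _⟩ | h)
        · exact h
        · exact absurd (h ▸ hdd) (lt_irrefl q)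
      · intro h
        exact Or.inl ⟨h, hn2⟩
    show g q = chi (seq g n) q
    cases hg : g q
    · simp only [chi, decide_eq_false_iff_not]
      rw [hqmem]
      simp [hg]
    · simp only [chi]
      rw [hqmem]
      simp [hg]
  · rw [tendsto_pi_nhds]
    intro t
    refine Filter.Tendsto.congr' ?_ tendsto_const_nhds
    rw [Filter.EventuallyEq]
    filter_upwards [eventually_not_mem_of_descending t.2 dd_strictAnti] with n hdd
    show false = upSet (seq g n) t
    symm
    simp only [upSet, decide_eq_false_iff_not]
    intro hle
    exact hdd (hle.1 (Or.inr rfl))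

lemma remainder_mem_Kset (g : ℚ → Bool) : ((g, zeroF) : XX) ∈ Kset :=
  mem_closure_of_tendsto (tendsto_seq g) (Filter.Eventually.of_forall (fun n => mem_range_self _))

lemma remainder_not_range (g : ℚ → Bool) : ((g, zeroF) : XX) ∉ Set.range emb := by
  rintro ⟨s, hs⟩
  have := congrArg Prod.snd hs
  have := congrFun this s
  simp only [emb, upSet, zeroF] at this
  rw [decide_eq_true (le_refl s)] at this
  exact Bool.noConfusion this

/-! ### Rosenthal representation -/

abbrev PP : Type := (ℚ → Bool) ⊕ ℕ

def Aset (s : wQ) : Set (ℚ → Bool) := {x | QInitSeg s.1 {q | x q = true}}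

lemma isClosed_Aset (s : wQ) : IsClosed (Aset s) := by
  have hA : Aset s = ⋂ (q : ℚ), (if q ∈ s.1 then {x : ℚ → Bool | x q = true}
      else if ∃ p ∈ s.1, q < p then {x : ℚ → Bool | x q = false} else Set.univ) := by
    ext x
    simp only [Set.mem_iInter]
    constructor
    · intro hx q
      split_ifs with h1 h2
      · exact hx.1 h1
      · obtain ⟨p, hp, hqp⟩ := h2
        show x q = false
        by_contra hxq
        rw [Bool.not_eq_false] at hxq
        exact absurd (hx.2 p hp q hxq h1) (not_le.2 hqp)
      · trivial
    · intro hx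
      constructor
      · intro q hq
        have := hx q
        rwa [if_pos hq] at this
      · intro p hp q hq hqn
        by_contra hc
        have := hx q
        rw [if_neg hqn, if_pos ⟨p, hp, not_le.1 hc⟩] at this
        rw [Set.mem_setOf_eq] at hq
        rw [Set.mem_setOf_eq, hq] at this
        exact Bool.noConfusion this
  rw [hA]
  refine isClosed_iInter (fun q => ?_)
  split_ifs
  · show IsClosed ((fun x : ℚ → Bool => x q) ⁻¹' {true})
    exact (isClosed_discrete _).preimage (continuous_apply q)
  · show IsClosed ((fun x : ℚ → Bool => x q) ⁻¹' {false})
    exact (isClosed_discrete _).preimage (continuous_apply q)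
  · exact isClosed_univ

def SK (k : XX) : Set PP :=
  {p | Sum.elim (fun x => k.2 (Tmax {q | x q = true}) = true)
    (fun n => k.1 (eqQ n) = true) p}

lemma isClosed_SK {k : XX} (hk : k ∈ Kset) : IsClosed (SK k) := by
  rw [isClosed_sum_iff]
  constructor
  · rcases mem_Kset_elim hk with ⟨s, rfl⟩ | hz
    · have : Sum.inl ⁻¹' SK (emb s) = Aset s := by
        ext x
        simp only [SK, Set.mem_preimage, Set.mem_setOf_eq, Sum.elim_inl, emb, upSet,
          decide_eq_true_eq, Aset]
        rw [← le_Tmax_iff]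
      rw [this]
      exact isClosed_Aset s
    · have : Sum.inl ⁻¹' SK k = ∅ := by
        ext x
        simp [SK, hz, zeroF]
      rw [this]
      exact isClosed_empty
  · exact isClosed_discrete _

noncomputable def FF (k : XX) : PP → ℝ := (SK k).indicator 1

lemma FF_baire {k : XX} (hk : k ∈ Kset) : BaireClassOne (FF k) := by
  letI := TopologicalSpace.upgradeIsCompletelyMetrizable PP
  rcases Set.eq_empty_or_nonempty (SK k) with hS | hS
  · refine ⟨fun _ _ => 0, fun _ => continuous_const, fun p => ?_⟩
    have : FF k p = 0 := by simp [FF, hS]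
    rw [this]
    exact tendsto_const_nhds
  · have hcl : IsClosed (SK k) := isClosed_SK hk
    refine ⟨fun n p => max 0 (1 - (n + 1 : ℝ) * Metric.infDist p (SK k)), ?_, ?_⟩
    · intro n
      exact continuous_const.max
        (continuous_const.sub (continuous_const.mul (Metric.continuous_infDist_pt _)))
    · intro p
      by_cases hp : p ∈ SK k
      · have h0 : Metric.infDist p (SK k) = 0 := Metric.infDist_zero_of_mem hp
        have hFF : FF k p = 1 := by simp [FF, Set.indicator_of_mem hp]
        rw [hFF]
        have : ∀ n : ℕ, max 0 (1 - (n + 1 : ℝ) * Metric.infDist p (SK k)) = 1 := by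
          intro n
          rw [h0]
          norm_num
        simp only [this]
        exact tendsto_const_nhds
      · have hd : 0 < Metric.infDist p (SK k) :=
          (hcl.notMem_iff_infDist_pos hS).1 hp
        have hFF : FF k p = 0 := by simp [FF, Set.indicator_of_notMem hp]
        rw [hFF]
        obtain ⟨N, hN⟩ := exists_nat_ge (1 / Metric.infDist p (SK k))
        refine tendsto_atTop_of_eventually_const (i₀ := N) (fun n hn => ?_)
        have h1 : (1 : ℝ) ≤ (n + 1 : ℝ) * Metric.infDist p (SK k) := by
          rw [div_le_iff₀ hd] at hN
          calc (1 : ℝ) ≤ N * Metric.infDist p (SK k) := hN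
          _ ≤ (n + 1 : ℝ) * Metric.infDist p (SK k) := by
              have : (N : ℝ) ≤ (n + 1 : ℝ) := by
                have : (N : ℝ) ≤ (n : ℝ) := by exact_mod_cast hn
                linarith
              exact mul_le_mul_of_nonneg_right this hd.le
        show max 0 (1 - (n + 1 : ℝ) * Metric.infDist p (SK k)) = 0
        rw [max_eq_left (by linarith)]

lemma mem_SK_inl {k : XX} {x : ℚ → Bool} :
    Sum.inl x ∈ SK k ↔ k.2 (Tmax {q | x q = true}) = true := Iff.rfl

lemma mem_SK_inr {k : XX} {n : ℕ} : Sum.inr n ∈ SK k ↔ k.1 (eqQ n) = true := Iff.rfl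

lemma FF_inl (k : XX) (x : ℚ → Bool) :
    FF k (Sum.inl x) = if k.2 (Tmax {q | x q = true}) = true then 1 else 0 := by
  rw [FF, Set.indicator_apply]
  split_ifs with h1 h2
  · rfl
  · exact absurd (mem_SK_inl.1 h1) h2
  · exact absurd (mem_SK_inl.2 ‹_›) h1
  · rfl

lemma FF_inr (k : XX) (n : ℕ) :
    FF k (Sum.inr n) = if k.1 (eqQ n) = true then 1 else 0 := by
  rw [FF, Set.indicator_apply]
  split_ifs with h1 h2
  · rfl
  · exact absurd (mem_SK_inr.1 h1) h2
  · exact absurd (mem_SK_inr.2 ‹_›) h1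
  · rfl

lemma boolreal {a b : Bool} (h : (if a = true then (1:ℝ) else 0) = (if b = true then 1 else 0)) :
    a = b := by
  cases a <;> cases b <;> simp_all <;> norm_num at h

lemma FF_injective {k k' : XX} (hk : FF k = FF k') : k = k' := by
  have h1 : k.1 = k'.1 := by
    funext q
    have := congrFun hk (Sum.inr (eqQ.symm q))
    rw [FF_inr, FF_inr, Equiv.apply_symm_apply] at this
    exact boolreal this
  have h2 : k.2 = k'.2 := by
    funext t
    have := congrFun hk (Sum.inl (chi t))
    rw [FF_inl, FF_inl] at this
    have hset : {q | chi t q = true} = t.1 := by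
      ext q; simp [chi]
    rw [hset, Tmax_coe] at this
    exact boolreal this
  exact Prod.ext_iff.2 ⟨h1, h2⟩

lemma continuous_FF : Continuous (fun k : ↥Kset => FF (k : XX)) := by
  refine continuous_pi (fun p => ?_)
  cases p with
  | inl x =>
    have hc : Continuous (fun k : ↥Kset =>
        if (k : XX).2 (Tmax {q | x q = true}) = true then (1:ℝ) else 0) := by
      have h1 : Continuous (fun k : ↥Kset => (k : XX).2 (Tmax {q | x q = true})) :=
        (continuous_apply _).comp (continuous_snd.comp continuous_subtype_val)
      exact (continuous_of_discreteTopology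
        (f := fun b : Bool => if b = true then (1:ℝ) else 0)).comp h1
    exact hc.congr (fun k => (FF_inl _ _).symm)
  | inr n =>
    have hc : Continuous (fun k : ↥Kset => if (k : XX).1 (eqQ n) = true then (1:ℝ) else 0) := by
      have h1 : Continuous (fun k : ↥Kset => (k : XX).1 (eqQ n)) :=
        (continuous_apply _).comp (continuous_fst.comp continuous_subtype_val)
      exact (continuous_of_discreteTopology
        (f := fun b : Bool => if b = true then (1:ℝ) else 0)).comp h1
    exact hc.congr (fun k => (FF_inr _ _).symm)

lemma ncard_aux {α : Type*} {s : Set α}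
    (h : ∀ x ∈ s, ∀ y ∈ s, ∀ z ∈ s, x = y ∨ x = z ∨ y = z) : s.Finite ∧ s.ncard ≤ 2 := by
  rcases Set.eq_empty_or_nonempty s with rfl | ⟨a, ha⟩
  · simp
  by_cases hsub : s ⊆ {a}
  · refine ⟨(Set.finite_singleton a).subset hsub, ?_⟩
    exact le_trans (Set.ncard_le_ncard hsub (Set.finite_singleton a)) (by simp)
  · obtain ⟨b, hb, hba⟩ : ∃ b ∈ s, b ≠ a := by
      rcases Set.not_subset.1 hsub with ⟨b, hb, hbn⟩
      exact ⟨b, hb, fun hh => hbn (hh ▸ rfl)⟩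
    have hsub2 : s ⊆ {a, b} := by
      intro c hc
      rcases h a ha b hb c hc with h' | h' | h'
      · exact absurd h'.symm hba
      · exact Or.inl h'.symm
      · exact Or.inr h'.symm
    have hfin2 : ({a, b} : Set α).Finite := (Set.finite_singleton b).insert a
    refine ⟨hfin2.subset hsub2, le_trans (Set.ncard_le_ncard hsub2 hfin2) ?_⟩
    exact le_trans (Set.ncard_insert_le a {b}) (by simp [Set.ncard_singleton])

end wQaux

open wQaux

/-- There exists a `2`-fibered Rosenthal compactification `K₀` of the tree `wℚ` whose
remainder is homeomorphic to the Cantor set. -/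
theorem exists_twoFibered_rosenthal_compactification_wQ :
    ∃ (K : Type) (_ : TopologicalSpace K) (_ : T2Space K) (_ : CompactSpace K)
      (e : wQ → K), IsEmbedding e ∧ Dense (Set.range e) ∧ NFibered 2 K ∧ IsRosenthal K ∧
      Nonempty (↥((Set.range e)ᶜ) ≃ₜ (ℕ → Bool)) := by
  classical
  have hcompact : CompactSpace ↥Kset := isCompact_iff_compactSpace.1 isCompact_Kset
  set e : wQ → ↥Kset := fun s => ⟨emb s, emb_mem_Kset s⟩ with he
  -- range facts
  have hval_range : ∀ k : ↥Kset, k ∈ Set.range e ↔ (k : XX) ∈ Set.range emb := by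
    intro k
    constructor
    · rintro ⟨s, rfl⟩; exact mem_range_self s
    · rintro ⟨s, hs⟩; exact ⟨s, Subtype.ext hs⟩
  have hsnd_zero : ∀ k : ↥Kset, k ∉ Set.range e → (k : XX).2 = zeroF := by
    intro k hk
    exact (mem_Kset_elim k.2).resolve_left (fun h => hk ((hval_range k).2 h))
  refine ⟨↥Kset, inferInstance, inferInstance, hcompact, e, ?_, ?_, ?_, ?_, ?_⟩
  · -- embedding
    exact isEmbedding_emb.codRestrict _ _
  · -- dense
    rw [dense_iff_closure_eq, Set.eq_univ_iff_forall]
    intro k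
    rw [closure_subtype]
    have himg : (Subtype.val '' Set.range e) = Set.range emb := by
      ext y
      constructor
      · rintro ⟨k', ⟨s, rfl⟩, rfl⟩; exact mem_range_self s
      · rintro ⟨s, rfl⟩; exact ⟨e s, mem_range_self s, rfl⟩
    rw [himg]
    exact k.2
  · -- 2-fibered
    refine ⟨(ℚ → Bool), inferInstance, inferInstance, fun k => (k : XX).1,
      continuous_fst.comp continuous_subtype_val, ?_⟩
    intro g
    apply ncard_aux
    have key : ∀ x ∈ (fun k : ↥Kset => (k : XX).1) ⁻¹' {g},
        ∀ y ∈ (fun k : ↥Kset => (k : XX).1) ⁻¹' {g},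
        (((x : XX) ∈ Set.range emb) ↔ ((y : XX) ∈ Set.range emb)) → x = y := by
      intro x hx y hy hiff
      have hx1 : (x : XX).1 = g := hx
      have hy1 : (y : XX).1 = g := hy
      by_cases hxr : (x : XX) ∈ Set.range emb
      · obtain ⟨s, hs⟩ := hxr
        obtain ⟨t, ht⟩ := hiff.1 ⟨s, hs⟩
        have : s = t := by
          apply chi_injective
          have h1 : chi s = g := by rw [← hx1, ← hs]; rfl
          have h2 : chi t = g := by rw [← hy1, ← ht]; rfl
          rw [h1, h2]
        apply Subtype.ext
        rw [← hs, ← ht, this]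
      · have hyr : (y : XX) ∉ Set.range emb := fun h => hxr (hiff.2 h)
        have hx2 : (x : XX).2 = zeroF := hsnd_zero x (fun h => hxr ((hval_range x).1 h))
        have hy2 : (y : XX).2 = zeroF := hsnd_zero y (fun h => hyr ((hval_range y).1 h))
        apply Subtype.ext
        exact Prod.ext_iff.2 ⟨hx1.trans hy1.symm, hx2.trans hy2.symm⟩
    intro x hx y hy z hz
    by_cases h1 : (x : XX) ∈ Set.range emb <;> by_cases h2 : (y : XX) ∈ Set.range emb <;>
      by_cases h3 : (z : XX) ∈ Set.range emb
    · exact Or.inl (key x hx y hy (iff_of_true h1 h2))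
    · exact Or.inl (key x hx y hy (iff_of_true h1 h2))
    · exact Or.inr (Or.inl (key x hx z hz (iff_of_true h1 h3)))
    · exact Or.inr (Or.inr (key y hy z hz (iff_of_false h2 h3)))
    · exact Or.inr (Or.inr (key y hy z hz (iff_of_true h2 h3)))
    · exact Or.inr (Or.inl (key x hx z hz (iff_of_false h1 h3)))
    · exact Or.inl (key x hx y hy (iff_of_false h1 h2))
    · exact Or.inl (key x hx y hy (iff_of_false h1 h2))
  · -- Rosenthal
    refine ⟨hcompact, PP, inferInstance, (by
        haveI : TopologicalSpace.SeparableSpace PP := inferInstance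
        infer_instance),
      Set.range (fun k : ↥Kset => FF (k : XX)), ?_, ?_⟩
    · rintro f ⟨k, rfl⟩
      exact FF_baire k.2
    · have hinj : Function.Injective (fun k : ↥Kset => FF (k : XX)) := by
        intro k k' h
        exact Subtype.ext (FF_injective h)
      have hcont : Continuous ⇑(Equiv.ofInjective _ hinj) := by
        exact continuous_FF.subtype_mk _
      exact ⟨Continuous.homeoOfEquivCompactToT2 (f := Equiv.ofInjective _ hinj) hcont⟩
  · -- remainder
    have hopen : IsOpen (Set.range e) := by
      have hEq : Set.range e = ⋃ t : wQ, {k : ↥Kset | (k : XX).2 t = true} := by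
        ext k
        simp only [Set.mem_iUnion, Set.mem_setOf_eq]
        constructor
        · rintro ⟨s, rfl⟩
          refine ⟨s, ?_⟩
          show upSet s s = true
          simp [upSet]
        · rintro ⟨t, ht⟩
          rcases mem_Kset_elim k.2 with h | h
          · exact (hval_range k).2 h
          · rw [h] at ht
            exact absurd ht (by simp [zeroF])
      rw [hEq]
      refine isOpen_iUnion (fun t => ?_)
      show IsOpen ((fun k : ↥Kset => (k : XX).2 t) ⁻¹' {true})
      exact (isOpen_discrete _).preimage
        ((continuous_apply t).comp (continuous_snd.comp continuous_subtype_val))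
    have hclosedR : IsClosed ((Set.range e)ᶜ) := hopen.isClosed_compl
    haveI : CompactSpace ↥((Set.range e)ᶜ) :=
      isCompact_iff_compactSpace.1 hclosedR.isCompact
    have hinvmem : ∀ g : ℚ → Bool,
        (⟨((g, zeroF) : XX), remainder_mem_Kset g⟩ : ↥Kset) ∈ (Set.range e)ᶜ := by
      intro g hg
      exact remainder_not_range g ((hval_range _).1 hg)
    let ρ : ↥((Set.range e)ᶜ) ≃ (ℚ → Bool) :=
      { toFun := fun r => ((r : ↥Kset) : XX).1
        invFun := fun g => ⟨⟨((g, zeroF) : XX), remainder_mem_Kset g⟩, hinvmem g⟩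
        left_inv := by
          rintro ⟨⟨⟨g', f'⟩, hmem⟩, hnr⟩
          have : f' = zeroF := hsnd_zero _ hnr
          subst this
          rfl
        right_inv := fun g => rfl }
    have hρcont : Continuous ⇑ρ :=
      continuous_fst.comp (continuous_subtype_val.comp continuous_subtype_val)
    exact ⟨(Continuous.homeoOfEquivCompactToT2 (f := ρ) hρcont).trans
      (Homeomorph.piCongrLeft (Y := fun _ => Bool) eqQ).symm⟩
end
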